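/- arXiv:2005.06116 — 6 statements merged into one kernel-verified Lean document; each statement's English description precedes it below -/
import Mathlib

section
/- Let α > 1 be real and β ∈ ℂ with Re β > −1. For every z ∈ ℂ with Im z < 0 one has the contour-rotation identity ∫₀^∞ t^β exp(i t^α − i z t) dt = exp(iπ(β+1)/(2α)) · ∫₀^∞ t^β exp(−t^α − i e^{iπ/(2α)} z t) dt, both integrals being absolutely convergent. -/
open MeasureTheory Set Complex Filter
open scoped ENNReal



-- continuity of cpow on positive reals
lemma contOn_cpow (e : ℂ) : ContinuousOn (fun t : ℝ => (t:ℂ) ^ e) (Ioi 0) := by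
  intro t ht
  have h1 : ContinuousAt (fun z : ℂ => z ^ e) ((t:ℝ) : ℂ) :=
    continuousAt_cpow_const (Or.inl (by simpa using ht))
  exact (h1.comp Complex.continuous_ofReal.continuousAt).continuousWithinAt

lemma integrableOn_rpow_mul_exp_neg {σ b : ℝ} (hσ : -1 < σ) (hb : 0 < b) :
    IntegrableOn (fun t : ℝ => t ^ σ * Real.exp (-b * t)) (Ioi 0) := by
  have := integrableOn_rpow_mul_exp_neg_mul_rpow hσ zero_lt_one hb
  simpa [Real.rpow_one] using this

lemma meas_aux (e w : ℂ) :
    AEStronglyMeasurable (fun t : ℝ => (t:ℂ) ^ e * Complex.exp (-(w * t)))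
      (volume.restrict (Ioi 0)) := by
  apply ContinuousOn.aestronglyMeasurable _ measurableSet_Ioi
  exact (contOn_cpow e).mul
    (((continuous_const.mul Complex.continuous_ofReal).neg.cexp).continuousOn)

lemma norm_aux {t : ℝ} (ht : 0 < t) (e w : ℂ) :
    ‖(t:ℂ) ^ e * Complex.exp (-(w * t))‖ = t ^ e.re * Real.exp (-w.re * t) := by
  rw [norm_mul,
    Complex.norm_cpow_eq_rpow_re_of_pos ht, Complex.norm_exp]
  congr 1
  simp [Complex.neg_re, Complex.mul_re]

/-- Complex-coefficient Gamma integral. -/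
lemma cgamma {s : ℂ} (hs : 0 < s.re) : ∀ {a : ℂ}, 0 < a.re →
    ∫ t : ℝ in Ioi 0, (t:ℂ) ^ (s-1) * Complex.exp (-(a * t)) = a ^ (-s) * Complex.Gamma s := by
  set F : ℂ → ℂ := fun w => ∫ t : ℝ in Ioi 0, (t:ℂ) ^ (s-1) * Complex.exp (-(w * t)) with hF
  set G : ℂ → ℂ := fun w => w ^ (-s) * Complex.Gamma s with hG
  set U : Set ℂ := {w : ℂ | 0 < w.re} with hU
  have hUopen : IsOpen U := isOpen_lt continuous_const Complex.continuous_re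
  have hUconn : IsPreconnected U := (convex_halfSpace_re_gt 0).isPreconnected
  -- integrability of the integrand and its derivative-in-w
  have hInt : ∀ (e : ℂ), -1 < e.re → ∀ (w : ℂ), 0 < w.re →
      IntegrableOn (fun t : ℝ => (t:ℂ) ^ e * Complex.exp (-(w * t))) (Ioi 0) := by
    intro e he w hw
    refine Integrable.mono' (integrableOn_rpow_mul_exp_neg he hw) (meas_aux e w) ?_
    filter_upwards [ae_restrict_mem measurableSet_Ioi] with t ht
    rw [norm_aux ht]
  -- F is differentiable on U
  have hFdiff : ∀ w₀ ∈ U, DifferentiableAt ℂ F w₀ := by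
    intro w₀ hw₀
    have hw₀' : (0:ℝ) < w₀.re := hw₀
    set ε : ℝ := w₀.re / 2 with hε
    have hεpos : 0 < ε := by positivity
    have key := hasDerivAt_integral_of_dominated_loc_of_deriv_le (F := fun w (t : ℝ) =>
        (t:ℂ) ^ (s-1) * Complex.exp (-(w * t)))
      (F' := fun w (t : ℝ) => (t:ℂ) ^ (s-1) * ((-t) * Complex.exp (-(w * t))))
      (x₀ := w₀) (bound := fun t : ℝ => t ^ s.re * Real.exp (-ε * t))
      (μ := volume.restrict (Ioi 0)) (Metric.ball_mem_nhds w₀ hεpos)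
      (Eventually.of_forall fun w => meas_aux (s-1) w)
      (hInt (s-1) (by simpa using hs) w₀ hw₀') ?_ ?_ ?_ ?_
    · exact key.2.differentiableAt
    · -- measurability of F' w₀
      apply ContinuousOn.aestronglyMeasurable _ measurableSet_Ioi
      exact (contOn_cpow (s-1)).mul
        ((Complex.continuous_ofReal.neg.mul
          ((continuous_const.mul Complex.continuous_ofReal).neg.cexp)).continuousOn)
    · -- bound
      filter_upwards [ae_restrict_mem measurableSet_Ioi] with t ht w hw
      have ht' : (0:ℝ) < t := ht
      have hre : ε ≤ w.re := by
        have h2 : ‖w - w₀‖ < ε := by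
          rwa [Metric.mem_ball, Complex.dist_eq] at hw
        have h3 : |(w - w₀).re| ≤ ‖w - w₀‖ := Complex.abs_re_le_norm _
        have h4 : -((w - w₀).re) < ε := lt_of_le_of_lt (le_trans (neg_le_abs _) h3) h2
        rw [Complex.sub_re] at h4
        simp only [hε] at *
        linarith
      calc ‖(t:ℂ) ^ (s-1) * ((-t) * Complex.exp (-(w * t)))‖
          = t ^ (s.re - 1) * (t * Real.exp (-w.re * t)) := by
            rw [norm_mul, norm_mul,
              Complex.norm_cpow_eq_rpow_re_of_pos ht', Complex.sub_re, Complex.one_re,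
              norm_neg, Complex.norm_real, Real.norm_of_nonneg ht'.le,
              Complex.norm_exp]
            congr 2
            simp [Complex.neg_re, Complex.mul_re]
        _ ≤ t ^ s.re * Real.exp (-ε * t) := by
            rw [← mul_assoc, ← Real.rpow_add_one ht'.ne', sub_add_cancel]
            have : Real.exp (-w.re * t) ≤ Real.exp (-ε * t) := by
              apply Real.exp_le_exp.mpr
              nlinarith
            exact mul_le_mul_of_nonneg_left this (Real.rpow_nonneg ht'.le _)
    · exact integrableOn_rpow_mul_exp_neg (by linarith) hεpos
    · -- differentiability in w
      filter_upwards [ae_restrict_mem measurableSet_Ioi] with t _ w _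
      have h1 : HasDerivAt (fun w : ℂ => -(w * t)) (-t) w := by
        exact (hasDerivAt_mul_const (x := w) ((t:ℝ):ℂ)).neg
      have h2 := h1.cexp
      simpa [mul_comm] using h2.const_mul ((t:ℂ) ^ (s-1))
  have hGdiff : ∀ w₀ ∈ U, DifferentiableAt ℂ G w₀ := by
    intro w₀ hw₀
    apply DifferentiableAt.mul_const
    exact (differentiableAt_id.cpow (differentiableAt_const _) (Or.inl hw₀))
  have hFa : AnalyticOnNhd ℂ F U :=
    (DifferentiableOn.analyticOnNhd (fun w hw => (hFdiff w hw).differentiableWithinAt) hUopen)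
  have hGa : AnalyticOnNhd ℂ G U :=
    (DifferentiableOn.analyticOnNhd (fun w hw => (hGdiff w hw).differentiableWithinAt) hUopen)
  -- equality on reals near 1
  have hfreq : ∃ᶠ w in nhdsWithin (1:ℂ) {(1:ℂ)}ᶜ, F w = G w := by
    have htend : Tendsto (fun n : ℕ => (1 : ℂ) + (n+1 : ℂ)⁻¹) atTop
        (nhdsWithin (1:ℂ) {(1:ℂ)}ᶜ) := by
      apply tendsto_nhdsWithin_of_tendsto_nhds_of_eventually_within
      · have : Tendsto (fun n : ℕ => ((n+1 : ℂ))⁻¹) atTop (nhds 0) := by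
          have := tendsto_natCast_atTop_atTop (R := ℝ)
          have h2 : Tendsto (fun n : ℕ => ((n:ℝ)+1)) atTop atTop :=
            tendsto_atTop_add_const_right _ 1 this
          have h3 : Tendsto (fun n : ℕ => ((n:ℝ)+1)⁻¹) atTop (nhds 0) :=
            h2.inv_tendsto_atTop
          have h4 := (Complex.continuous_ofReal.tendsto 0).comp h3
          have h5 : (fun n : ℕ => ((n:ℂ)+1)⁻¹) = fun n : ℕ => ((((n:ℝ)+1)⁻¹ : ℝ) : ℂ) := by
            ext n; push_cast; ring
          rw [h5]; simpa [Function.comp_def] using h4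
        simpa using (tendsto_const_nhds (x := (1:ℂ))).add this
      · filter_upwards with n
        simp only [mem_compl_iff, mem_singleton_iff]
        intro h
        have h0 : ((n:ℂ)+1)⁻¹ = 0 := by linear_combination h
        exact Nat.cast_add_one_ne_zero n (inv_eq_zero.mp h0)
    refine htend.frequently (Frequently.of_forall fun n => ?_)
    -- F and G agree at real points > 0
    have hr : (0:ℝ) < 1 + ((n:ℝ)+1)⁻¹ := by positivity
    have := Complex.integral_cpow_mul_exp_neg_mul_Ioi hs hr
    have hcast : ((1 + ((n:ℝ)+1)⁻¹ : ℝ) : ℂ) = (1 : ℂ) + ((n:ℂ)+1)⁻¹ := by push_cast; ring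
    rw [hF, hG]
    simp only
    rw [← hcast, this]
    congr 1
    rw [one_div, Complex.inv_cpow _ _ (by
      rw [Complex.arg_ofReal_of_nonneg hr.le]; exact Real.pi_ne_zero.symm),
      ← Complex.cpow_neg]
  intro a ha
  exact hFa.eqOn_of_preconnected_of_frequently_eq hGa hUconn (by simp [hU] : (1:ℂ) ∈ U) hfreq ha



/-- Complex-coefficient Gamma integral after substitution `u = t^α`. -/
lemma cpowGamma {α : ℝ} (hα : 0 < α) {w : ℂ} (hw : -1 < w.re) {a : ℂ} (ha : 0 < a.re) :
    ∫ t : ℝ in Ioi 0, (t:ℂ) ^ w * Complex.exp (-(a * ((t ^ α : ℝ) : ℂ))) =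
      (1/(α:ℂ)) * a ^ (-((w+1)/(α:ℂ))) * Complex.Gamma ((w+1)/(α:ℂ)) := by
  have hα0 : (α:ℂ) ≠ 0 := by exact_mod_cast hα.ne'
  set s : ℂ := (w+1)/(α:ℂ) with hsdef
  have hαs : (α:ℂ) * s = w + 1 := by rw [hsdef]; field_simp
  have hs : 0 < s.re := by
    rw [hsdef]
    simp only [Complex.div_ofReal_re, Complex.add_re, Complex.one_re]
    exact div_pos (by linarith) hα
  have key := cgamma hs ha
  rw [← MeasureTheory.integral_comp_rpow_Ioi_of_pos
    (g := fun y : ℝ => (y:ℂ)^(s-1) * Complex.exp (-(a*y))) hα] at key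
  have hcong : EqOn (fun x : ℝ => (α * x^(α-1)) •
        ((((x^α : ℝ)):ℂ)^(s-1) * Complex.exp (-(a * ((x^α:ℝ):ℂ)))))
      (fun x : ℝ => (α:ℂ) * ((x:ℂ)^w * Complex.exp (-(a * ((x^α:ℝ):ℂ))))) (Ioi 0) := by
    intro x hx
    have hx0 : (0:ℝ) < x := hx
    have hxc : (x:ℂ) ≠ 0 := ofReal_ne_zero.mpr hx0.ne'
    have hexp : ((α-1:ℝ):ℂ) + (α:ℂ)*(s-1) = w := by push_cast; linear_combination hαs
    have hmul : ((x:ℂ)^(α:ℂ))^(s-1) = (x:ℂ)^((α:ℂ)*(s-1)) := by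
      rw [Complex.cpow_mul_ofReal_nonneg hx0.le, Complex.ofReal_cpow hx0.le]
    have hx2 : (x:ℂ)^((α:ℂ)-1) * (x:ℂ)^((α:ℂ)*(s-1)) = (x:ℂ)^w := by
      rw [← Complex.cpow_add _ _ hxc]
      congr 1
      linear_combination hαs
    simp only [real_smul, Complex.ofReal_mul, Complex.ofReal_cpow hx0.le,
      Complex.ofReal_sub, Complex.ofReal_one]
    rw [hmul]
    linear_combination ((α:ℂ) * Complex.exp (-(a * ((x:ℂ)^(α:ℂ))))) * hx2
  rw [setIntegral_congr_fun measurableSet_Ioi hcong, integral_const_mul] at key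
  rw [hsdef] at key ⊢
  field_simp at key ⊢
  linear_combination key

lemma realGamma {α : ℝ} (hα : 0 < α) {σ : ℝ} (hσ : -1 < σ) :
    ∫ t : ℝ in Ioi 0, t ^ σ * Real.exp (-(t ^ α)) = (1/α) * Real.Gamma ((σ+1)/α) := by
  have h := cpowGamma hα (w := (σ:ℂ)) (by simpa using hσ) (a := 1) (by norm_num)
  have hco : ∀ r : ℝ, (r:ℂ) = @RCLike.ofReal ℂ _ r := fun r => rfl
  have h2 : ((∫ t : ℝ in Ioi 0, t ^ σ * Real.exp (-(t ^ α)) : ℝ) : ℂ)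
      = ∫ t : ℝ in Ioi 0, (t:ℂ) ^ (σ:ℂ) * Complex.exp (-(1 * ((t^α:ℝ):ℂ))) := by
    rw [hco, ← integral_ofReal]
    refine setIntegral_congr_fun measurableSet_Ioi (fun t ht => ?_)
    have ht0 : (0:ℝ) < t := ht
    rw [← hco, one_mul]
    push_cast [← Complex.ofReal_cpow ht0.le]
    ring
  have h3 : (1/(α:ℂ)) * (1:ℂ) ^ (-(((σ:ℂ)+1)/(α:ℂ))) * Complex.Gamma (((σ:ℂ)+1)/(α:ℂ))
      = (((1/α) * Real.Gamma ((σ+1)/α) : ℝ) : ℂ) := by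
    rw [Complex.one_cpow]
    have h4 : (((σ:ℂ)+1)/(α:ℂ)) = (((σ+1)/α : ℝ) : ℂ) := by push_cast; ring
    rw [h4, Complex.Gamma_ofReal]
    push_cast
    ring
  have := h2.trans (h.trans h3)
  exact_mod_cast this

lemma absGamma {s : ℂ} (hs : 0 < s.re) : ‖Complex.Gamma s‖ ≤ Real.Gamma s.re := by
  rw [Complex.Gamma_eq_integral hs]
  unfold Complex.GammaIntegral
  rw [Real.Gamma_eq_integral hs]
  refine le_trans (norm_integral_le_integral_norm _) (le_of_eq ?_)
  refine setIntegral_congr_fun measurableSet_Ioi (fun t ht => ?_)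
  have ht0 : (0:ℝ) < t := ht
  rw [norm_mul,
    Complex.norm_cpow_eq_rpow_re_of_pos ht0, Complex.norm_real, Real.norm_eq_abs,
    _root_.abs_of_nonneg (Real.exp_pos _).le, Complex.sub_re, Complex.one_re]


/-- Integrability of `t^σ exp(-b t^α + K t)` on `(0,∞)` when `α > 1`. -/
lemma integrableOn_aux {α σ b K : ℝ} (hα : 1 < α) (hσ : -1 < σ) (hb : 0 < b) :
    IntegrableOn (fun t : ℝ => t ^ σ * Real.exp (-b * t ^ α + K * t)) (Ioi 0) := by
  -- bound the linear part
  have hb2 : 0 < b/2 := by linarith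
  obtain ⟨T, hT⟩ : ∃ T : ℝ, ∀ t ≥ T, |K| ≤ (b/2) * t^(α-1) ∧ (1:ℝ) ≤ t := by
    have h1 : ∀ᶠ t : ℝ in atTop, (2*|K|/b : ℝ) ≤ t^(α-1) :=
      (tendsto_rpow_atTop (by linarith)).eventually_ge_atTop _
    have h2 := h1.and (eventually_ge_atTop (1:ℝ))
    obtain ⟨T, hT⟩ := eventually_atTop.mp h2
    exact ⟨T, fun t ht => ⟨by
      have := (hT t ht).1
      rw [div_le_iff₀ hb] at this
      nlinarith [this], (hT t ht).2⟩⟩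
  set T' : ℝ := max T 0 with hT'
  have hcont : ContinuousOn (fun t : ℝ => K*t - (b/2)*t^α) (Icc 0 T') := by
    apply ContinuousOn.sub
    · exact (continuous_const.mul continuous_id).continuousOn
    · exact continuousOn_const.mul (continuousOn_id.rpow_const
        (fun x _ => Or.inr (by linarith)))
  obtain ⟨x0, _, hx0⟩ := isCompact_Icc.exists_isMaxOn
    ⟨0, by simp [hT', le_max_right]⟩ hcont
  set M : ℝ := max (K*x0 - (b/2)*x0^α) 0 with hM
  have hbound : ∀ t : ℝ, 0 < t → K*t - (b/2)*t^α ≤ M := by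
    intro t ht
    rcases le_or_gt t T' with h | h
    · exact le_trans (hx0 ⟨ht.le, h⟩) (le_max_left _ _)
    · have htT : t ≥ T := le_trans (le_max_left _ _) h.le
      obtain ⟨hK, ht1⟩ := hT t htT
      have ht0 : t ≠ 0 := by linarith
      have : K*t ≤ (b/2) * t^(α-1) * t := by
        have h1 : K*t ≤ |K| * t := by nlinarith [le_abs_self K]
        nlinarith
      rw [mul_assoc, ← Real.rpow_add_one ht0, sub_add_cancel] at this
      have : K*t - (b/2)*t^α ≤ 0 := by linarith
      exact le_trans this (le_max_right _ _)
  refine Integrable.mono'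
    ((integrableOn_rpow_mul_exp_neg_mul_rpow hσ (by linarith : (0:ℝ) < α) hb2).const_mul (Real.exp M)) ?_ ?_
  · apply ContinuousOn.aestronglyMeasurable _ measurableSet_Ioi
    apply ContinuousOn.mul
    · exact continuousOn_id.rpow_const (fun x hx => Or.inl (ne_of_gt hx))
    · apply Continuous.comp_continuousOn Real.continuous_exp
      apply ContinuousOn.add
      · exact continuousOn_const.mul (continuousOn_id.rpow_const
          (fun x _ => Or.inr (by linarith)))
      · exact (continuous_const.mul continuous_id).continuousOn
  · filter_upwards [ae_restrict_mem measurableSet_Ioi] with t ht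
    have ht0 : (0:ℝ) < t := ht
    have h1 : -b * t^α + K*t ≤ -(b/2)*t^α + M := by
      have := hbound t ht0
      nlinarith [Real.rpow_nonneg ht0.le α]
    rw [Real.norm_eq_abs, _root_.abs_of_nonneg (by positivity)]
    calc t ^ σ * Real.exp (-b * t ^ α + K * t)
        ≤ t ^ σ * Real.exp (-(b/2)*t^α + M) := by
          apply mul_le_mul_of_nonneg_left (Real.exp_le_exp.mpr h1) (Real.rpow_nonneg ht0.le _)
      _ = Real.exp M * (t ^ σ * Real.exp (-(b/2) * t ^ α)) := by
          rw [Real.exp_add]; ring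



lemma cexp_tsum (w : ℂ) : Complex.exp w = ∑' n : ℕ, w ^ n / n.factorial := by
  rw [Complex.exp_eq_exp_ℂ, NormedSpace.exp_eq_tsum_div]

lemma rexp_tsum (x : ℝ) : Real.exp x = ∑' n : ℕ, x ^ n / n.factorial := by
  rw [Real.exp_eq_exp_ℝ, NormedSpace.exp_eq_tsum_div]

section Key
variable {α : ℝ} {β : ℂ} {a : ℂ} (c : ℂ)

/-- continuity of the rotated Gaussian-type integrand -/
lemma contOn_exp_part (a : ℂ) (hα : 0 < α) :
    ContinuousOn (fun t : ℝ => Complex.exp (-(a * ((t^α : ℝ):ℂ)))) (Ioi 0) := by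
  apply Complex.continuous_exp.comp_continuousOn
  apply ContinuousOn.neg
  apply ContinuousOn.mul continuousOn_const
  exact Complex.continuous_ofReal.comp_continuousOn
    (continuousOn_id.rpow_const (fun x _ => Or.inr hα.le))

lemma key (hα : 1 < α) (hβ : -1 < β.re) (ha : 0 < a.re) :
    IntegrableOn (fun t : ℝ => (t:ℂ)^β * Complex.exp (-(a * ((t^α : ℝ):ℂ)) + c*t)) (Ioi 0) ∧
    Summable (fun n : ℕ => ‖c‖^n / n.factorial *
      ∫ t : ℝ in Ioi 0, t^(β.re+n) * Real.exp (-a.re * t^α)) ∧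
    (∫ t : ℝ in Ioi 0, (t:ℂ)^β * Complex.exp (-(a * ((t^α : ℝ):ℂ)) + c*t))
      = ∑' n : ℕ, c^n / n.factorial *
          ((1/(α:ℂ)) * a^(-((β+n+1)/(α:ℂ))) * Complex.Gamma ((β+n+1)/(α:ℂ))) := by
  have hα0 : (0:ℝ) < α := by linarith
  set σ : ℝ := β.re with hσdef
  set b : ℝ := a.re with hbdef
  set f : ℕ → ℝ → ℂ := fun n t => c^n / n.factorial *
    ((t:ℂ)^(β+n) * Complex.exp (-(a * ((t^α : ℝ):ℂ)))) with hfdef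
  set F : ℝ → ℂ := fun t => (t:ℂ)^β * Complex.exp (-(a * ((t^α : ℝ):ℂ)) + c*t) with hFdef
  -- norms
  have h_norm : ∀ (n : ℕ) {t : ℝ}, 0 < t →
      ‖f n t‖ = (‖c‖^n / n.factorial) * (t^(σ+n) * Real.exp (-b * t^α)) := by
    intro n t ht
    rw [hfdef]
    simp only [norm_mul, norm_div, norm_pow, Complex.norm_natCast]
    rw [Complex.norm_cpow_eq_rpow_re_of_pos ht,
      Complex.norm_exp]
    have h1 : (β + (n:ℂ)).re = σ + n := by simp [hσdef]
    have h2 : (-(a * ((t^α : ℝ):ℂ))).re = -b * t^α := by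
      simp [Complex.mul_re, hbdef]
    rw [h1, h2]
  have h_exp_norm : ∀ {t : ℝ}, 0 < t →
      ‖F t‖ = t^σ * Real.exp (-b * t^α + c.re * t) := by
    intro t ht
    rw [hFdef]
    simp only [norm_mul]
    rw [Complex.norm_cpow_eq_rpow_re_of_pos ht,
      Complex.norm_exp]
    congr 2
    simp [Complex.mul_re, Complex.add_re, hbdef]
  -- measurability
  have h_meas : ∀ n : ℕ, AEStronglyMeasurable (f n) (volume.restrict (Ioi 0)) := by
    intro n
    apply ContinuousOn.aestronglyMeasurable _ measurableSet_Ioi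
    exact continuousOn_const.mul ((contOn_cpow (β+n)).mul (contOn_exp_part a hα0))
  have h_meas_F : AEStronglyMeasurable F (volume.restrict (Ioi 0)) := by
    apply ContinuousOn.aestronglyMeasurable _ measurableSet_Ioi
    apply (contOn_cpow β).mul
    apply Complex.continuous_exp.comp_continuousOn
    apply ContinuousOn.add
    · apply ContinuousOn.neg
      apply ContinuousOn.mul continuousOn_const
      exact Complex.continuous_ofReal.comp_continuousOn
        (continuousOn_id.rpow_const (fun x _ => Or.inr hα0.le))
    · exact (continuous_const.mul Complex.continuous_ofReal).continuousOn
  -- dominating function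
  have hdom : IntegrableOn (fun t : ℝ => t^σ * Real.exp (-b * t^α + ‖c‖ * t)) (Ioi 0) :=
    integrableOn_aux hα hβ ha
  -- pointwise sum of norms
  have h_tsum_norm : ∀ {t : ℝ}, 0 < t →
      ∑' n : ℕ, ‖f n t‖ = t^σ * Real.exp (-b * t^α + ‖c‖ * t) := by
    intro t ht
    have h1 : ∀ n : ℕ, ‖f n t‖ = (t^σ * Real.exp (-b * t^α)) * ((‖c‖*t)^n / n.factorial) := by
      intro n
      rw [h_norm n ht, Real.rpow_add ht, Real.rpow_natCast, mul_pow]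
      ring
    rw [tsum_congr h1, tsum_mul_left, ← rexp_tsum, Real.exp_add]
    ring
  have h_summable_pt : ∀ {t : ℝ}, 0 < t → Summable (fun n => ‖f n t‖) := by
    intro t ht
    apply Summable.congr ((Real.summable_pow_div_factorial (‖c‖*t)).mul_left
      (t^σ * Real.exp (-b * t^α)))
    intro n
    rw [h_norm n ht, Real.rpow_add ht, Real.rpow_natCast, mul_pow]
    ring
  -- Tonelli bound
  have hS : ∑' n : ℕ, ∫⁻ t : ℝ in Ioi 0, (‖f n t‖₊ : ℝ≥0∞) ≠ ⊤ := by
    rw [← MeasureTheory.lintegral_tsum (f := fun n t => (‖f n t‖₊ : ℝ≥0∞)) (fun n => (h_meas n).enorm)]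
    have heq : ∀ᵐ t ∂(volume.restrict (Ioi (0:ℝ))),
        ∑' n : ℕ, (‖f n t‖₊ : ENNReal)
          = ENNReal.ofReal (t^σ * Real.exp (-b * t^α + ‖c‖ * t)) := by
      filter_upwards [ae_restrict_mem measurableSet_Ioi] with t ht
      have ht0 : (0:ℝ) < t := ht
      have h2 : ∀ n : ℕ, (‖f n t‖₊ : ENNReal) = ENNReal.ofReal ‖f n t‖ := by
        intro n; exact (ofReal_norm_eq_enorm _).symm
      rw [tsum_congr h2, ← ENNReal.ofReal_tsum_of_nonneg (fun n => norm_nonneg _)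
        (h_summable_pt ht0), h_tsum_norm ht0]
    rw [lintegral_congr_ae heq]
    exact (Integrable.lintegral_lt_top hdom).ne
  -- summability of norm integrals
  have h_int_norm : ∀ n : ℕ, ∫ t : ℝ in Ioi 0, ‖f n t‖
      = ‖c‖^n / n.factorial * ∫ t : ℝ in Ioi 0, t^(σ+n) * Real.exp (-b * t^α) := by
    intro n
    rw [← integral_const_mul]
    refine setIntegral_congr_fun measurableSet_Ioi (fun t ht => ?_)
    exact h_norm n ht
  have h_summable : Summable (fun n : ℕ => ‖c‖^n / n.factorial *
      ∫ t : ℝ in Ioi 0, t^(σ+n) * Real.exp (-b * t^α)) := by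
    have := ENNReal.summable_toReal hS
    apply Summable.congr this
    intro n
    rw [← h_int_norm n, integral_norm_eq_lintegral_enorm (h_meas n)]; rfl
  -- integrability of F
  have h_int_F : IntegrableOn F (Ioi 0) := by
    refine Integrable.mono' hdom h_meas_F ?_
    filter_upwards [ae_restrict_mem measurableSet_Ioi] with t ht
    have ht0 : (0:ℝ) < t := ht
    rw [h_exp_norm ht0]
    apply mul_le_mul_of_nonneg_left _ (Real.rpow_nonneg ht0.le _)
    apply Real.exp_le_exp.mpr
    have : c.re ≤ ‖c‖ := by
      calc c.re ≤ |c.re| := le_abs_self _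
        _ ≤ ‖c‖ := Complex.abs_re_le_norm c
    nlinarith
  refine ⟨h_int_F, h_summable, ?_⟩
  -- expansion
  have h_pt : EqOn F (fun t => ∑' n, f n t) (Ioi 0) := by
    intro t ht
    have ht0 : (0:ℝ) < t := ht
    have htc : ((t:ℝ):ℂ) ≠ 0 := Complex.ofReal_ne_zero.mpr ht0.ne'
    rw [hFdef]
    simp only
    rw [Complex.exp_add, cexp_tsum (c*(t:ℂ)), ← tsum_mul_left, ← tsum_mul_left]
    apply tsum_congr
    intro n
    rw [hfdef]
    simp only
    rw [Complex.cpow_add _ _ htc, Complex.cpow_natCast, mul_pow]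
    ring
  rw [setIntegral_congr_fun measurableSet_Ioi h_pt, integral_tsum h_meas hS]
  apply tsum_congr
  intro n
  rw [hfdef]
  simp only
  rw [integral_const_mul, cpowGamma hα0 (w := β+n) (by
    simp only [Complex.add_re, Complex.natCast_re]
    have : (0:ℝ) ≤ n := Nat.cast_nonneg n
    linarith) ha]



/-- Contour rotation identity for the Fourier–Laplace transform of
`t ↦ t^β exp(i t^α)` when `Im z < 0`. -/
theorem stmt_1 (α : ℝ) (hα : 1 < α) (β : ℂ) (hβ : -1 < β.re)
    (z : ℂ) (hz : z.im < 0) :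
    IntegrableOn (fun t : ℝ => (t : ℂ) ^ β *
      Complex.exp (Complex.I * (↑(t ^ α) : ℂ) - Complex.I * z * t)) (Ioi 0) ∧
    IntegrableOn (fun t : ℝ => (t : ℂ) ^ β *
      Complex.exp (-(↑(t ^ α) : ℂ) -
        Complex.I * Complex.exp (Complex.I * Real.pi / (2 * α)) * z * t)) (Ioi 0) ∧
    (∫ t in Ioi (0:ℝ), (t : ℂ) ^ β *
        Complex.exp (Complex.I * (↑(t ^ α) : ℂ) - Complex.I * z * t)) =
      Complex.exp (Complex.I * Real.pi * (β + 1) / (2 * α)) *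
        ∫ t in Ioi (0:ℝ), (t : ℂ) ^ β *
          Complex.exp (-(↑(t ^ α) : ℂ) -
            Complex.I * Complex.exp (Complex.I * Real.pi / (2 * α)) * z * t) := by
  have hα0 : (0:ℝ) < α := by linarith
  have hαC : (α:ℂ) ≠ 0 := by exact_mod_cast hα0.ne'
  set σ : ℝ := β.re with hσdef
  set c : ℂ := -(Complex.I * z) with hcdef
  have hcre : c.re = z.im := by simp [hcdef]
  have hcnorm : ‖c‖ = ‖z‖ := by simp [hcdef]
  set E : ℂ := Complex.exp (Complex.I * Real.pi / (2 * α)) with hEdef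
  set s : ℕ → ℂ := fun n => (β+n+1)/(α:ℂ) with hsdef
  have hsre : ∀ n : ℕ, (s n).re = (σ+n+1)/α := by
    intro n; simp [hsdef, hσdef]
  have hsim : ∀ n : ℕ, (s n).im = β.im/α := by
    intro n; simp [hsdef]
  have hsrepos : ∀ n : ℕ, 0 < (s n).re := by
    intro n
    rw [hsre n]
    have : (0:ℝ) ≤ n := Nat.cast_nonneg n
    apply div_pos (by linarith) hα0
  -- the LHS integrand and its properties
  set G : ℝ → ℂ := fun t => (t : ℂ) ^ β *
      Complex.exp (Complex.I * (↑(t ^ α) : ℂ) - Complex.I * z * t) with hGdef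
  have hGnorm : ∀ {t : ℝ}, 0 < t → ‖G t‖ = t ^ σ * Real.exp (z.im * t) := by
    intro t ht
    rw [hGdef]
    simp only [norm_mul]
    rw [Complex.norm_cpow_eq_rpow_re_of_pos ht,
      Complex.norm_exp]
    congr 2
    simp [Complex.sub_re, Complex.mul_re, Complex.mul_im]
  have hGmeas : AEStronglyMeasurable G (volume.restrict (Ioi 0)) := by
    apply ContinuousOn.aestronglyMeasurable _ measurableSet_Ioi
    apply (contOn_cpow β).mul
    apply Complex.continuous_exp.comp_continuousOn
    apply ContinuousOn.sub
    · exact continuousOn_const.mul (Complex.continuous_ofReal.comp_continuousOn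
        (continuousOn_id.rpow_const (fun x _ => Or.inr hα0.le)))
    · exact ((continuous_const.mul Complex.continuous_ofReal).continuousOn)
  have hbnd_int : IntegrableOn (fun t : ℝ => t ^ σ * Real.exp (z.im * t)) (Ioi 0) := by
    have h := integrableOn_rpow_mul_exp_neg hβ (b := -z.im) (by linarith)
    simpa using h
  have hGint : IntegrableOn G (Ioi 0) := by
    refine Integrable.mono' hbnd_int hGmeas ?_
    filter_upwards [ae_restrict_mem measurableSet_Ioi] with t ht
    rw [hGnorm ht]
  refine ⟨hGint, ?_, ?_⟩
  · -- second integrability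
    have h2 := (key (α := α) (β := β) (a := 1) (-(Complex.I * E * z)) hα hβ (by norm_num)).1
    have : (fun t : ℝ => (t:ℂ)^β * Complex.exp (-((1:ℂ) * ((t^α : ℝ):ℂ)) + (-(Complex.I * E * z))*t))
        = fun t : ℝ => (t : ℂ) ^ β * Complex.exp (-(↑(t ^ α) : ℂ) - Complex.I * E * z * t) := by
      funext t; ring_nf
    rwa [this] at h2
  · -- main equality
    set Q : ℕ → ℂ := fun n => c^n / n.factorial *
      ((1/(α:ℂ)) * (-Complex.I)^(-(s n)) * Complex.Gamma (s n)) with hQdef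
    set P : ℝ → ℕ → ℂ := fun ε n => c^n / n.factorial *
      ((1/(α:ℂ)) * ((ε:ℂ) - Complex.I)^(-(s n)) * Complex.Gamma (s n)) with hPdef
    -- Claim 1 : dominated convergence of integrals
    have claim1 : Tendsto (fun ε : ℝ => ∫ t : ℝ in Ioi 0,
        (t:ℂ)^β * Complex.exp (-((((ε:ℝ):ℂ) - Complex.I) * ((t^α : ℝ):ℂ)) + c*t))
        (nhdsWithin 0 (Ioi 0)) (nhds (∫ t : ℝ in Ioi 0, G t)) := by
      apply tendsto_integral_filter_of_dominated_convergence
        (bound := fun t : ℝ => t ^ σ * Real.exp (z.im * t))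
      · filter_upwards with ε
        apply ContinuousOn.aestronglyMeasurable _ measurableSet_Ioi
        apply (contOn_cpow β).mul
        apply Complex.continuous_exp.comp_continuousOn
        apply ContinuousOn.add
        · apply ContinuousOn.neg
          exact continuousOn_const.mul (Complex.continuous_ofReal.comp_continuousOn
            (continuousOn_id.rpow_const (fun x _ => Or.inr hα0.le)))
        · exact ((continuous_const.mul Complex.continuous_ofReal).continuousOn)
      · filter_upwards [self_mem_nhdsWithin] with ε hε
        filter_upwards [ae_restrict_mem measurableSet_Ioi] with t ht
        have ht0 : (0:ℝ) < t := ht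
        have hε0 : (0:ℝ) < ε := hε
        rw [norm_mul, Complex.norm_cpow_eq_rpow_re_of_pos ht0,
          Complex.norm_exp]
        apply mul_le_mul_of_nonneg_left _ (Real.rpow_nonneg ht0.le _)
        apply Real.exp_le_exp.mpr
        have hre : (-((((ε:ℝ):ℂ) - Complex.I) * ((t^α : ℝ):ℂ)) + c*t).re
            = -(ε * t^α) + z.im * t := by
          simp [Complex.mul_re, Complex.sub_re, Complex.mul_im, hcdef]
        rw [hre]
        have : 0 ≤ ε * t^α := by positivity
        linarith
      · exact hbnd_int
      · filter_upwards [ae_restrict_mem measurableSet_Ioi] with t ht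
        have ht0 : (0:ℝ) < t := ht
        have hcont : Continuous (fun ε : ℝ =>
            (t:ℂ)^β * Complex.exp (-((((ε:ℝ):ℂ) - Complex.I) * ((t^α : ℝ):ℂ)) + c*(t:ℂ))) := by
          apply Continuous.mul continuous_const
          apply Complex.continuous_exp.comp
          apply Continuous.add _ continuous_const
          exact ((Complex.continuous_ofReal.sub continuous_const).mul continuous_const).neg
        have h0 := (hcont.tendsto 0).mono_left
          (nhdsWithin_le_nhds (s := Ioi (0:ℝ)))
        convert h0 using 2
        rw [hGdef]
        simp only
        congr 1
        push_cast
        rw [hcdef]; congr 1; ring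
    -- Claim 2 : series representation for each ε > 0
    have claim2 : ∀ ε : ℝ, ε ∈ Ioi (0:ℝ) → (∫ t : ℝ in Ioi 0,
        (t:ℂ)^β * Complex.exp (-((((ε:ℝ):ℂ) - Complex.I) * ((t^α : ℝ):ℂ)) + c*t))
        = ∑' n : ℕ, P ε n := by
      intro ε hε
      have ha : (0:ℝ) < (((ε:ℝ):ℂ) - Complex.I).re := by simpa using hε
      exact (key c hα hβ ha).2.2
    -- summability of the bound
    have hGammaSummable : Summable (fun n : ℕ => ‖c‖^n / n.factorial *
        ((1/α) * Real.Gamma ((σ+n+1)/α))) := by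
      have h1 := (key (α := α) (β := β) (a := 1) c hα hβ (by norm_num)).2.1
      apply Summable.congr h1
      intro n
      congr 1
      have e1 : ∫ t : ℝ in Ioi 0, t^(β.re+n) * Real.exp (-(1:ℂ).re * t^α)
          = ∫ t : ℝ in Ioi 0, t^(σ+n) * Real.exp (-(t^α)) := by
        refine setIntegral_congr_fun measurableSet_Ioi (fun t _ => ?_)
        norm_num [hσdef]
      rw [e1, realGamma hα0 (by
        have : (0:ℝ) ≤ n := Nat.cast_nonneg n
        linarith)]
    -- Claim 3 : Tannery
    set C0 : ℝ := Real.exp (Real.pi * (|β.im| / α)) with hC0def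
    have claim3 : Tendsto (fun ε : ℝ => ∑' n : ℕ, P ε n) (nhdsWithin 0 (Ioi 0))
        (nhds (∑' n : ℕ, Q n)) := by
      apply tendsto_tsum_of_dominated_convergence
        (bound := fun n : ℕ => C0 * (‖c‖^n / n.factorial * ((1/α) * Real.Gamma ((σ+n+1)/α))))
      · exact hGammaSummable.mul_left C0
      · intro k
        have hX : Tendsto (fun ε : ℝ => (((ε:ℝ):ℂ) - Complex.I)) (nhdsWithin 0 (Ioi 0))
            (nhds (-Complex.I)) := by
          have hc1 : Continuous (fun ε : ℝ => (((ε:ℝ):ℂ) - Complex.I)) :=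
            Complex.continuous_ofReal.sub continuous_const
          have h0 := (hc1.tendsto (0:ℝ)).mono_left (nhdsWithin_le_nhds (s := Ioi (0:ℝ)))
          simpa using h0
        have hXc : ContinuousAt (fun w : ℂ => w ^ (-(s k))) (-Complex.I) :=
          continuousAt_cpow_const (Or.inr (by simp : (-Complex.I).im ≠ 0))
        have h2 := (hXc.tendsto.comp hX)
        have h3 := ((h2.const_mul ((1:ℂ)/α)).mul_const (Complex.Gamma (s k))).const_mul
          (c^k / (k.factorial : ℂ))
        exact h3
      · filter_upwards [Ioc_mem_nhdsGT_of_mem (by exact ⟨le_rfl, zero_lt_one⟩ :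
          (0:ℝ) ∈ Ico 0 1)] with ε hε
        intro k
        have hε0 : (0:ℝ) < ε := hε.1
        have hεim : (((ε:ℝ):ℂ) - Complex.I).im = -1 := by simp
        have hεI : (((ε:ℝ):ℂ) - Complex.I) ≠ 0 := by
          intro h
          rw [h] at hεim
          simp at hεim
        have hcpow : ‖(((ε:ℝ):ℂ) - Complex.I) ^ (-(s k))‖ ≤ C0 := by
          rw [Complex.norm_cpow_of_ne_zero hεI]
          have habs : 1 ≤ ‖(((ε:ℝ):ℂ) - Complex.I)‖ := by
            have h1 := Complex.abs_im_le_norm (((ε:ℝ):ℂ) - Complex.I)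
            rw [hεim] at h1
            simpa using h1
          have hnum : ‖(((ε:ℝ):ℂ) - Complex.I)‖ ^ (-(s k)).re ≤ 1 :=
            Real.rpow_le_one_of_one_le_of_nonpos habs
              (by rw [Complex.neg_re]; linarith [hsrepos k])
          have hden : Real.exp (-(Real.pi * (|β.im| / α)))
              ≤ Real.exp (Complex.arg (((ε:ℝ):ℂ) - Complex.I) * (-(s k)).im) := by
            apply Real.exp_le_exp.mpr
            have h1 : |Complex.arg (((ε:ℝ):ℂ) - Complex.I) * (-(s k)).im|
                ≤ Real.pi * (|β.im| / α) := by
              rw [abs_mul]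
              apply mul_le_mul (Complex.abs_arg_le_pi _) ?_ (abs_nonneg _) Real.pi_pos.le
              rw [Complex.neg_im, abs_neg, hsim k, abs_div, abs_of_pos hα0]
            linarith [neg_abs_le (Complex.arg (((ε:ℝ):ℂ) - Complex.I) * (-(s k)).im)]
          calc ‖(((ε:ℝ):ℂ) - Complex.I)‖ ^ (-(s k)).re /
                Real.exp (Complex.arg (((ε:ℝ):ℂ) - Complex.I) * (-(s k)).im)
              ≤ 1 / Real.exp (-(Real.pi * (|β.im| / α))) :=
                div_le_div₀ zero_le_one hnum (Real.exp_pos _) hden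
            _ = C0 := by rw [Real.exp_neg, one_div, inv_inv, hC0def]
        have hGa : ‖Complex.Gamma (s k)‖ ≤ Real.Gamma ((σ+k+1)/α) := by
          rw [← hsre k]
          exact absGamma (hsrepos k)
        have hnormP : ‖P ε k‖ = (‖c‖^k/(k.factorial:ℝ)) * (1/α) *
            (‖(((ε:ℝ):ℂ) - Complex.I)^(-(s k))‖ * ‖Complex.Gamma (s k)‖) := by
          rw [hPdef]
          simp only [norm_mul, norm_div, norm_pow, Complex.norm_natCast]
          rw [norm_one, Complex.norm_real, Real.norm_of_nonneg hα0.le]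
          ring
        rw [hnormP]
        calc (‖c‖^k/(k.factorial:ℝ)) * (1/α) *
              (‖(((ε:ℝ):ℂ) - Complex.I)^(-(s k))‖ * ‖Complex.Gamma (s k)‖)
            ≤ (‖c‖^k/(k.factorial:ℝ)) * (1/α) * (C0 * Real.Gamma ((σ+k+1)/α)) := by
              apply mul_le_mul_of_nonneg_left
                (mul_le_mul hcpow hGa (norm_nonneg _) (Real.exp_pos _).le)
                (by positivity)
          _ = C0 * (‖c‖^k / k.factorial * ((1/α) * Real.Gamma ((σ+k+1)/α))) := by ring
    -- combine
    have claim1' : Tendsto (fun ε : ℝ => ∑' n : ℕ, P ε n) (nhdsWithin 0 (Ioi 0))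
        (nhds (∫ t : ℝ in Ioi 0, G t)) := by
      apply claim1.congr'
      filter_upwards [self_mem_nhdsWithin] with ε hε
      exact claim2 ε hε
    have hAQ : (∫ t : ℝ in Ioi 0, G t) = ∑' n : ℕ, Q n :=
      tendsto_nhds_unique claim1' claim3
    -- RHS series
    set c' : ℂ := -(Complex.I * E * z) with hc'def
    have hc'E : c' = E * c := by rw [hc'def, hcdef]; ring
    have hBser : (∫ t : ℝ in Ioi 0, (t:ℂ)^β *
        Complex.exp (-(((t^α : ℝ):ℂ)) - Complex.I * E * z * t))
        = ∑' n : ℕ, c'^n / n.factorial *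
          ((1/(α:ℂ)) * (1:ℂ)^(-(s n)) * Complex.Gamma (s n)) := by
      have h2 := (key (α := α) (β := β) (a := 1) c' hα hβ (by norm_num)).2.2
      have heq : (fun t : ℝ => (t:ℂ)^β * Complex.exp (-((1:ℂ) * ((t^α : ℝ):ℂ)) + c'*t))
          = fun t : ℝ => (t:ℂ)^β * Complex.exp (-(((t^α : ℝ):ℂ)) - Complex.I * E * z * t) := by
        funext t
        rw [hc'def]
        ring_nf
      rw [heq] at h2
      exact h2
    rw [hAQ, hBser, ← tsum_mul_left]
    apply tsum_congr
    intro n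
    rw [hQdef]
    simp only
    rw [Complex.one_cpow]
    have hne : (-Complex.I : ℂ) ≠ 0 := by simp
    have hpow : (-Complex.I) ^ (-(s n)) =
        Complex.exp (Complex.I * Real.pi * (β+1) / (2*α) + n * (Complex.I * Real.pi / (2*α))) := by
      rw [Complex.cpow_def_of_ne_zero hne, Complex.log_neg_I]
      congr 1
      rw [hsdef]
      field_simp
      ring
    have hE : Complex.exp (Complex.I * Real.pi * (β+1) / (2*α)) * E^n
        = (-Complex.I) ^ (-(s n)) := by
      rw [hEdef, ← Complex.exp_nat_mul, ← Complex.exp_add, hpow]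
    rw [hc'E, mul_pow, ← hE]
    ring
end Key
end

section
/- Let α > 1 be real, β ∈ ℂ with Re β > −1, and z ∈ ℂ with Im z < 0. Then the integral over the circular arc of radius R joining R e^{iπ/(2α)} to R tends to 0 as R → ∞; explicitly, ∫₀^{π/(2α)} (R e^{iη})^β exp(i R^α e^{iαη} − i z R e^{iη}) · i R e^{iη} dη → 0 as R → ∞. -/
open MeasureTheory Set Filter

/-- The integral over the circular arc of radius `R` joining `R e^{iπ/(2α)}`
to `R` tends to `0` as `R → ∞`; here `(R e^{iη})^β = exp(β(log R + iη))`. -/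
theorem stmt_3 (α : ℝ) (hα : 1 < α) (β : ℂ) (hβ : -1 < β.re)
    (z : ℂ) (hz : z.im < 0) :
    Tendsto (fun R : ℝ =>
      ∫ η in (0:ℝ)..(Real.pi / (2 * α)),
        Complex.exp (β * (Real.log R + Complex.I * η)) *
          Complex.exp (Complex.I * (↑(R ^ α) : ℂ) * Complex.exp (Complex.I * (α * η))
            - Complex.I * z * R * Complex.exp (Complex.I * η)) *
          (Complex.I * R * Complex.exp (Complex.I * η)))
      atTop (nhds 0) := by
  have hα0 : (0:ℝ) < α := lt_trans one_pos hα
  have hπ := Real.pi_pos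
  set T : ℝ := Real.pi / (2 * α) with hT
  have hT0 : 0 < T := div_pos hπ (by linarith)
  have hT2 : T < Real.pi / 2 := by
    rw [hT, div_lt_div_iff₀ (by linarith) (by norm_num)]
    nlinarith
  set c : ℝ := Real.cos T with hc
  have hc0 : 0 < c := Real.cos_pos_of_mem_Ioo ⟨by linarith, hT2⟩
  set d : ℝ := -z.im * c with hd
  have hd0 : 0 < d := mul_pos (by linarith) hc0
  have key : ∀ R : ℝ, 1 ≤ R → |z.re| ≤ R ^ (α - 1) →
      ‖∫ η in (0:ℝ)..T,
        Complex.exp (β * (Real.log R + Complex.I * η)) *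
          Complex.exp (Complex.I * (↑(R ^ α) : ℂ) * Complex.exp (Complex.I * (α * η))
            - Complex.I * z * R * Complex.exp (Complex.I * η)) *
          (Complex.I * R * Complex.exp (Complex.I * η))‖
      ≤ (Real.exp (|β.im| * Real.pi) * T) * (R ^ (β.re + 1) * Real.exp (-d * R)) := by
    intro R hR1 hRz
    have hR0 : (0:ℝ) < R := lt_of_lt_of_le one_pos hR1
    have hbd : ∀ η ∈ Set.uIoc (0:ℝ) T,
        ‖Complex.exp (β * (Real.log R + Complex.I * η)) *
          Complex.exp (Complex.I * (↑(R ^ α) : ℂ) * Complex.exp (Complex.I * (α * η))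
            - Complex.I * z * R * Complex.exp (Complex.I * η)) *
          (Complex.I * R * Complex.exp (Complex.I * η))‖
        ≤ Real.exp (|β.im| * Real.pi) * (R ^ (β.re + 1) * Real.exp (-d * R)) := by
      intro η hη
      rw [Set.uIoc_of_le hT0.le] at hη
      obtain ⟨hη0, hηT⟩ := hη
      have hηπ2 : α * η ≤ Real.pi / 2 := by
        have : α * η ≤ α * T := by nlinarith
        calc α * η ≤ α * T := this
          _ = Real.pi / 2 := by rw [hT]; field_simp
      have hsin : Real.sin η ≤ Real.sin (α * η) := by
        apply Real.sin_le_sin_of_le_of_le_pi_div_two (by linarith) hηπ2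
        nlinarith
      have hsin0 : 0 ≤ Real.sin (α * η) := Real.sin_nonneg_of_nonneg_of_le_pi
        (by nlinarith) (by linarith)
      have hsinη0 : 0 ≤ Real.sin η := Real.sin_nonneg_of_nonneg_of_le_pi hη0.le
        (by linarith)
      have hcos : c ≤ Real.cos η := Real.cos_le_cos_of_nonneg_of_le_pi hη0.le
        (by linarith) hηT
      -- norm computation
      rw [norm_mul, norm_mul,
        Complex.norm_exp, Complex.norm_exp]
      have hre1 : (β * (↑(Real.log R) + Complex.I * ↑η)).re
          = β.re * Real.log R - β.im * η := by
        simp [Complex.mul_re]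
      have hre2 : (Complex.I * (↑(R ^ α) : ℂ) * Complex.exp (Complex.I * (↑α * ↑η))
            - Complex.I * z * ↑R * Complex.exp (Complex.I * ↑η)).re
          = -(R ^ α * Real.sin (α * η)) + R * (z.re * Real.sin η + z.im * Real.cos η) := by
        simp [Complex.exp_re, Complex.exp_im, Complex.mul_re, Complex.mul_im]
        ring
      have habs3 : ‖Complex.I * ↑R * Complex.exp (Complex.I * ↑η)‖ = R := by
        simp [Complex.norm_exp, abs_of_pos hR0]
      rw [hre1, hre2, habs3]
      -- bound first factor
      have h1 : Real.exp (β.re * Real.log R - β.im * η)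
          ≤ R ^ β.re * Real.exp (|β.im| * Real.pi) := by
        rw [sub_eq_add_neg, Real.exp_add, Real.rpow_def_of_pos hR0,
          mul_comm (Real.log R)]
        apply mul_le_mul_of_nonneg_left _ (Real.exp_nonneg _)
        rw [Real.exp_le_exp]
        calc -(β.im * η) ≤ |β.im * η| := neg_le_abs _
          _ = |β.im| * |η| := abs_mul _ _
          _ ≤ |β.im| * Real.pi := by
              apply mul_le_mul_of_nonneg_left _ (abs_nonneg _)
              rw [abs_of_nonneg hη0.le]; linarith
      -- bound second factor
      have h2 : Real.exp (-(R ^ α * Real.sin (α * η))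
            + R * (z.re * Real.sin η + z.im * Real.cos η))
          ≤ Real.exp (-d * R) := by
        rw [Real.exp_le_exp, hd]
        have hRα : R * |z.re| ≤ R ^ α := by
          calc R * |z.re| ≤ R * R ^ (α - 1) :=
                mul_le_mul_of_nonneg_left hRz hR0.le
            _ = R ^ α := by
                rw [show α = 1 + (α - 1) by ring, Real.rpow_add hR0, Real.rpow_one]
                ring_nf
        have hA : R * (z.re * Real.sin η) ≤ R ^ α * Real.sin (α * η) := by
          calc R * (z.re * Real.sin η) ≤ R * (|z.re| * Real.sin (α * η)) := by
                apply mul_le_mul_of_nonneg_left _ hR0.le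
                calc z.re * Real.sin η ≤ |z.re| * Real.sin η :=
                      mul_le_mul_of_nonneg_right (le_abs_self _) hsinη0
                  _ ≤ |z.re| * Real.sin (α * η) :=
                      mul_le_mul_of_nonneg_left hsin (abs_nonneg _)
            _ = (R * |z.re|) * Real.sin (α * η) := by ring
            _ ≤ R ^ α * Real.sin (α * η) :=
                mul_le_mul_of_nonneg_right hRα hsin0
        have hB : R * (z.im * Real.cos η) ≤ R * (z.im * c) := by
          apply mul_le_mul_of_nonneg_left _ hR0.le
          nlinarith
        nlinarith
      calc Real.exp (β.re * Real.log R - β.im * η) *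
            Real.exp (-(R ^ α * Real.sin (α * η))
              + R * (z.re * Real.sin η + z.im * Real.cos η)) * R
          ≤ (R ^ β.re * Real.exp (|β.im| * Real.pi)) * Real.exp (-d * R) * R := by
            apply mul_le_mul_of_nonneg_right _ hR0.le
            exact mul_le_mul h1 h2 (Real.exp_nonneg _)
              (by positivity)
        _ = Real.exp (|β.im| * Real.pi) * (R ^ (β.re + 1) * Real.exp (-d * R)) := by
            rw [Real.rpow_add_one hR0.ne']
            ring
    have := intervalIntegral.norm_integral_le_of_norm_le_const hbd
    rw [sub_zero, abs_of_pos hT0] at this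
    calc _ ≤ Real.exp (|β.im| * Real.pi) * (R ^ (β.re + 1) * Real.exp (-d * R)) * T :=
          this
      _ = (Real.exp (|β.im| * Real.pi) * T) * (R ^ (β.re + 1) * Real.exp (-d * R)) := by
          ring
  -- conclude by squeezing
  rw [tendsto_zero_iff_norm_tendsto_zero]
  have hlim : Tendsto (fun R : ℝ =>
      (Real.exp (|β.im| * Real.pi) * T) * (R ^ (β.re + 1) * Real.exp (-d * R)))
      atTop (nhds 0) := by
    have := (tendsto_rpow_mul_exp_neg_mul_atTop_nhds_zero (β.re + 1) d hd0).const_mul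
      (Real.exp (|β.im| * Real.pi) * T)
    simpa using this
  apply squeeze_zero' (Eventually.of_forall fun R => norm_nonneg _) _ hlim
  have h1 : ∀ᶠ R : ℝ in atTop, (1:ℝ) ≤ R := eventually_ge_atTop 1
  have h2 : ∀ᶠ R : ℝ in atTop, |z.re| ≤ R ^ (α - 1) :=
    (tendsto_rpow_atTop (by linarith)).eventually_ge_atTop |z.re|
  filter_upwards [h1, h2] with R hR1 hR2
  exact key R hR1 hR2
end

section
/- Let α > 1 be real and β ∈ ℂ with Re β > −1. For every ε > 0 there exist constants K > 0 and R₀ > 0 such that for all R ≥ R₀ and all θ ∈ [−π − π/α + ε, −ε], |G_{α,β}(R e^{iθ}) − e^{−i(θ+π/2)(β+1)} Γ(β+1) R^{−(β+1)}| ≤ K R^{−Re β − α − 1}, where Γ is the Euler gamma function and R^{−(β+1)} = exp(−(β+1) log R). -/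
open MeasureTheory Set

/-- The entire extension of the Fourier–Laplace transform `F_{α,β}`. -/
noncomputable def Gab (α : ℝ) (β : ℂ) (z : ℂ) : ℂ :=
  Complex.exp (Complex.I * Real.pi * (β + 1) / (2 * α)) *
    ∫ t in Ioi (0:ℝ), (t : ℂ) ^ β *
      Complex.exp (-(↑(t ^ α) : ℂ) -
        Complex.I * Complex.exp (Complex.I * Real.pi / (2 * α)) * z * t)

set_option maxHeartbeats 1600000

namespace Stmt5

open Filter

lemma re_mul_ofReal (z : ℂ) (r : ℝ) : (z * ↑r).re = z.re * r := by
  simp [Complex.mul_re]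

/-- Lower bound on the exponent. -/
lemma lower_bound {α a c : ℝ} (hα : 1 < α) (ha : 0 ≤ a) (h : 0 < a ∨ 0 < c) :
    ∃ b' C : ℝ, 0 < b' ∧ 0 ≤ C ∧ ∀ s : ℝ, 0 < s → b' * s - C ≤ a * s ^ α + c * s := by
  rcases h with h | h
  · set s₁ : ℝ := max 1 (((|c| + 1) / a) ^ (1 / (α - 1))) with hs₁
    have hs₁1 : 1 ≤ s₁ := le_max_left _ _
    have hs₁0 : 0 < s₁ := lt_of_lt_of_le one_pos hs₁1
    refine ⟨1, s₁ + |c| * s₁, one_pos, by positivity, fun s hs => ?_⟩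
    rcases le_or_gt s s₁ with hcase | hcase
    · have h1 : c * s ≥ -(|c| * s₁) := by
        have : -(|c| * s₁) ≤ -(|c| * s) := by nlinarith [abs_nonneg c]
        nlinarith [neg_abs_le c, abs_nonneg c]
      have h2 : 0 ≤ a * s ^ α := by positivity
      nlinarith
    · have hs1 : 1 ≤ s := le_trans hs₁1 hcase.le
      have hpow : ((|c| + 1) / a) ≤ s ^ (α - 1) := by
        have h0 : (0:ℝ) ≤ (|c| + 1) / a := by positivity
        have : ((|c| + 1) / a) ^ (1 / (α - 1)) ≤ s := le_trans (le_max_right _ _) hcase.le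
        have := Real.rpow_le_rpow (Real.rpow_nonneg h0 _) this (by linarith : (0:ℝ) ≤ α - 1)
        rwa [← Real.rpow_mul h0, one_div,
          inv_mul_cancel₀ (by linarith : α - 1 ≠ 0), Real.rpow_one] at this
      have hsα : s ^ α = s ^ (α - 1) * s := by
        rw [← Real.rpow_add_one (ne_of_gt hs) (α - 1)]; ring_nf
      have h3 : (|c| + 1) * s ≤ a * s ^ α := by
        have h3' : |c| + 1 ≤ s ^ (α - 1) * a := (div_le_iff₀ h).mp hpow
        rw [hsα]; nlinarith
      have h4 : -( |c| * s) ≤ c * s := by nlinarith [neg_abs_le c, abs_nonneg c]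
      nlinarith [abs_nonneg c, mul_nonneg (abs_nonneg c) hs₁0.le]
  · exact ⟨c, 0, h, le_rfl, fun s hs => by nlinarith [Real.rpow_nonneg hs.le α]⟩

/-- Integrability of `s^p * exp(-(a s^α + c s))` on `(0,∞)`. -/
lemma int_main {α p a c : ℝ} (hα : 1 < α) (hp : -1 < p) (ha : 0 ≤ a) (h : 0 < a ∨ 0 < c) :
    IntegrableOn (fun s : ℝ => s ^ p * Real.exp (-(a * s ^ α + c * s))) (Ioi 0) := by
  obtain ⟨b', C, hb', hC, hbd⟩ := lower_bound hα ha h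
  have hg : IntegrableOn (fun s : ℝ => Real.exp C * (s ^ p * Real.exp (-(b' * s)))) (Ioi 0) := by
    have h0 := integrableOn_rpow_mul_exp_neg_mul_rpow hp (by norm_num : (0:ℝ) < 1) hb'
    have h1 : IntegrableOn (fun s : ℝ => s ^ p * Real.exp (-(b' * s))) (Ioi 0) := by
      refine h0.congr_fun (fun x hx => ?_) measurableSet_Ioi
      simp only [Real.rpow_one, neg_mul]
    exact MeasureTheory.Integrable.const_mul h1 (Real.exp C)
  refine Integrable.mono' hg ?_ ?_
  · apply ContinuousOn.aestronglyMeasurable ?_ measurableSet_Ioi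
    intro s hs
    have hrw : ContinuousWithinAt (fun s : ℝ => s ^ α) (Ioi 0) s :=
      (Real.continuousAt_rpow_const s α (Or.inl (ne_of_gt hs))).continuousWithinAt
    have hlin : ContinuousWithinAt (fun s : ℝ => a * s ^ α + c * s) (Ioi 0) s :=
      (continuousWithinAt_const.mul hrw).add (continuousWithinAt_const.mul continuousWithinAt_id)
    exact ((Real.continuousAt_rpow_const s p (Or.inl (ne_of_gt hs))).continuousWithinAt).mul
      (Real.continuous_exp.continuousAt.comp_continuousWithinAt hlin.neg)
  · filter_upwards [ae_restrict_mem measurableSet_Ioi] with s hs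
    have hs0 : (0:ℝ) < s := hs
    rw [Real.norm_eq_abs, abs_of_nonneg (by positivity)]
    have : Real.exp (-(a * s ^ α + c * s)) ≤ Real.exp C * Real.exp (-(b' * s)) := by
      rw [← Real.exp_add, Real.exp_le_exp]
      have := hbd s hs0; linarith
    calc s ^ p * Real.exp (-(a * s ^ α + c * s)) ≤ s ^ p * (Real.exp C * Real.exp (-(b' * s))) :=
          mul_le_mul_of_nonneg_left this (Real.rpow_nonneg hs0.le p)
      _ = Real.exp C * (s ^ p * Real.exp (-(b' * s))) := by ring



/-- The rotated integrand. -/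
noncomputable def fI (α : ℝ) (β μ₀ b₀ : ℂ) (ψ s : ℝ) : ℂ :=
  (s:ℂ) ^ β * Complex.exp ((β+1) * (↑ψ * Complex.I)
    - μ₀ * Complex.exp (↑(α*ψ) * Complex.I) * ↑(s ^ α)
    - b₀ * Complex.exp (↑ψ * Complex.I) * ↑s)

noncomputable def PI (α : ℝ) (β μ₀ b₀ : ℂ) (ψ s : ℝ) : ℂ :=
  (β+1) - ↑α * (μ₀ * Complex.exp (↑(α*ψ) * Complex.I)) * ↑(s ^ α)
    - b₀ * Complex.exp (↑ψ * Complex.I) * ↑s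

lemma norm_fI {α : ℝ} {β μ₀ b₀ : ℂ} {ψ s : ℝ} (hs : 0 < s) :
    ‖fI α β μ₀ b₀ ψ s‖ = s ^ β.re *
      Real.exp (((β+1) * (↑ψ * Complex.I)).re
        - (μ₀ * Complex.exp (↑(α*ψ) * Complex.I)).re * s ^ α
        - (b₀ * Complex.exp (↑ψ * Complex.I)).re * s) := by
  rw [fI, norm_mul,
    Complex.norm_cpow_eq_rpow_re_of_pos hs, Complex.norm_exp]
  congr 2
  simp [Complex.sub_re, re_mul_ofReal]

lemma norm_PI {α : ℝ} {β μ₀ b₀ : ℂ} {ψ s : ℝ} (hα : 0 < α) (hs : 0 < s) :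
    ‖PI α β μ₀ b₀ ψ s‖ ≤ ‖β+1‖ + α * ‖μ₀‖ * s ^ α + ‖b₀‖ * s := by
  have h1 : ‖↑α * (μ₀ * Complex.exp (↑(α*ψ) * Complex.I)) * (↑(s ^ α):ℂ)‖
      = α * ‖μ₀‖ * s ^ α := by
    simp only [norm_mul, Complex.norm_exp_ofReal_mul_I,
      Complex.norm_real, Real.norm_eq_abs, abs_of_pos hα, abs_of_nonneg (Real.rpow_nonneg hs.le α)]
    ring
  have h2 : ‖b₀ * Complex.exp (↑ψ * Complex.I) * (↑s:ℂ)‖ = ‖b₀‖ * s := by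
    rw [norm_mul, norm_mul]
    simp [Complex.norm_exp_ofReal_mul_I, Complex.norm_real, abs_of_pos hs]
  calc ‖PI α β μ₀ b₀ ψ s‖
      ≤ ‖(β+1) - ↑α * (μ₀ * Complex.exp (↑(α*ψ) * Complex.I)) * ↑(s ^ α)‖
        + ‖b₀ * Complex.exp (↑ψ * Complex.I) * (↑s:ℂ)‖ := norm_sub_le _ _
    _ ≤ ‖β+1‖ + ‖↑α * (μ₀ * Complex.exp (↑(α*ψ) * Complex.I)) * (↑(s ^ α):ℂ)‖
        + ‖b₀ * Complex.exp (↑ψ * Complex.I) * (↑s:ℂ)‖ := by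
        gcongr; exact norm_sub_le _ _
    _ = ‖β+1‖ + α * ‖μ₀‖ * s ^ α + ‖b₀‖ * s := by rw [h1, h2]

lemma contOn_fI {α : ℝ} {β μ₀ b₀ : ℂ} {ψ : ℝ} :
    ContinuousOn (fI α β μ₀ b₀ ψ) (Ioi (0:ℝ)) := by
  intro s hs
  have hs0 : (0:ℝ) < s := hs
  have h1 : ContinuousWithinAt (fun s : ℝ => ((s:ℂ))^β) (Ioi 0) s :=
    (Complex.continuousAt_ofReal_cpow_const s β (Or.inr (ne_of_gt hs0))).continuousWithinAt
  have h2 : ContinuousWithinAt (fun s : ℝ => ((s ^ α : ℝ) : ℂ)) (Ioi 0) s :=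
    Complex.continuous_ofReal.continuousAt.comp_continuousWithinAt
      ((Real.continuousAt_rpow_const s α (Or.inl (ne_of_gt hs0))).continuousWithinAt)
  have h3 : ContinuousWithinAt (fun s : ℝ => ((s : ℝ) : ℂ)) (Ioi 0) s :=
    Complex.continuous_ofReal.continuousAt.comp_continuousWithinAt continuousWithinAt_id
  exact h1.mul (Complex.continuous_exp.continuousAt.comp_continuousWithinAt
    (((continuousWithinAt_const).sub (continuousWithinAt_const.mul h2)).sub
      (continuousWithinAt_const.mul h3)))

lemma contOn_PIfI {α : ℝ} {β μ₀ b₀ : ℂ} {ψ : ℝ} :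
    ContinuousOn (fun s => PI α β μ₀ b₀ ψ s * fI α β μ₀ b₀ ψ s) (Ioi (0:ℝ)) := by
  have hP : ContinuousOn (PI α β μ₀ b₀ ψ) (Ioi (0:ℝ)) := by
    intro s hs
    have hs0 : (0:ℝ) < s := hs
    have h2 : ContinuousWithinAt (fun s : ℝ => ((s ^ α : ℝ) : ℂ)) (Ioi 0) s :=
      Complex.continuous_ofReal.continuousAt.comp_continuousWithinAt
        ((Real.continuousAt_rpow_const s α (Or.inl (ne_of_gt hs0))).continuousWithinAt)
    have h3 : ContinuousWithinAt (fun s : ℝ => ((s : ℝ) : ℂ)) (Ioi 0) s :=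
      Complex.continuous_ofReal.continuousAt.comp_continuousWithinAt continuousWithinAt_id
    exact ((continuousWithinAt_const).sub (continuousWithinAt_const.mul h2)).sub
      (continuousWithinAt_const.mul h3)
  exact hP.mul contOn_fI



section
variable {α : ℝ} {β μ₀ b₀ : ℂ} {ψ a₀ c₀ : ℝ}

lemma integrable_fI (hα : 1 < α) (hβ : -1 < β.re) (ha₀ : 0 ≤ a₀) (hac : 0 < a₀ ∨ 0 < c₀)
    (hμ : a₀ ≤ (μ₀ * Complex.exp (↑(α*ψ) * Complex.I)).re)
    (hb : c₀ ≤ (b₀ * Complex.exp (↑ψ * Complex.I)).re) :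
    IntegrableOn (fI α β μ₀ b₀ ψ) (Ioi (0:ℝ)) := by
  set E0 : ℝ := ((β+1) * (↑ψ * Complex.I)).re with hE0
  refine Integrable.mono' (((int_main hα hβ ha₀ hac).const_mul (Real.exp E0)))
    (contOn_fI.aestronglyMeasurable measurableSet_Ioi) ?_
  filter_upwards [ae_restrict_mem measurableSet_Ioi] with s hs
  have hs0 : (0:ℝ) < s := hs
  rw [norm_fI hs0]
  have hexp : Real.exp (E0 - (μ₀ * Complex.exp (↑(α*ψ) * Complex.I)).re * s ^ α
      - (b₀ * Complex.exp (↑ψ * Complex.I)).re * s)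
      ≤ Real.exp E0 * Real.exp (-(a₀ * s ^ α + c₀ * s)) := by
    rw [← Real.exp_add, Real.exp_le_exp]
    have h1 : a₀ * s ^ α ≤ (μ₀ * Complex.exp (↑(α*ψ) * Complex.I)).re * s ^ α :=
      mul_le_mul_of_nonneg_right hμ (Real.rpow_nonneg hs0.le α)
    have h2 : c₀ * s ≤ (b₀ * Complex.exp (↑ψ * Complex.I)).re * s :=
      mul_le_mul_of_nonneg_right hb hs0.le
    linarith
  calc s ^ β.re * Real.exp _ ≤ s ^ β.re * (Real.exp E0 * Real.exp (-(a₀ * s ^ α + c₀ * s))) :=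
        mul_le_mul_of_nonneg_left hexp (Real.rpow_nonneg hs0.le _)
    _ = Real.exp E0 * (s ^ β.re * Real.exp (-(a₀ * s ^ α + c₀ * s))) := by ring

lemma integrable_PIfI (hα : 1 < α) (hβ : -1 < β.re) (ha₀ : 0 ≤ a₀) (hac : 0 < a₀ ∨ 0 < c₀)
    (hμ : a₀ ≤ (μ₀ * Complex.exp (↑(α*ψ) * Complex.I)).re)
    (hb : c₀ ≤ (b₀ * Complex.exp (↑ψ * Complex.I)).re) :
    IntegrableOn (fun s => PI α β μ₀ b₀ ψ s * fI α β μ₀ b₀ ψ s) (Ioi (0:ℝ)) := by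
  set E0 : ℝ := ((β+1) * (↑ψ * Complex.I)).re with hE0
  have hg : IntegrableOn (fun s : ℝ => Real.exp E0 *
      (‖β+1‖ * (s ^ β.re * Real.exp (-(a₀ * s ^ α + c₀ * s)))
        + (α * ‖μ₀‖) * (s ^ (β.re + α) * Real.exp (-(a₀ * s ^ α + c₀ * s)))
        + ‖b₀‖ * (s ^ (β.re + 1) * Real.exp (-(a₀ * s ^ α + c₀ * s))))) (Ioi (0:ℝ)) := by
    refine Integrable.const_mul (Integrable.add (Integrable.add ?_ ?_) ?_) _
    · exact (int_main hα hβ ha₀ hac).const_mul _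
    · exact (int_main hα (by linarith) ha₀ hac).const_mul _
    · exact (int_main hα (by linarith) ha₀ hac).const_mul _
  refine Integrable.mono' hg (contOn_PIfI.aestronglyMeasurable measurableSet_Ioi) ?_
  filter_upwards [ae_restrict_mem measurableSet_Ioi] with s hs
  have hs0 : (0:ℝ) < s := hs
  rw [norm_mul, norm_fI hs0]
  have hexp : Real.exp (E0 - (μ₀ * Complex.exp (↑(α*ψ) * Complex.I)).re * s ^ α
      - (b₀ * Complex.exp (↑ψ * Complex.I)).re * s)
      ≤ Real.exp E0 * Real.exp (-(a₀ * s ^ α + c₀ * s)) := by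
    rw [← Real.exp_add, Real.exp_le_exp]
    have h1 : a₀ * s ^ α ≤ (μ₀ * Complex.exp (↑(α*ψ) * Complex.I)).re * s ^ α :=
      mul_le_mul_of_nonneg_right hμ (Real.rpow_nonneg hs0.le α)
    have h2 : c₀ * s ≤ (b₀ * Complex.exp (↑ψ * Complex.I)).re * s :=
      mul_le_mul_of_nonneg_right hb hs0.le
    linarith
  have hP := norm_PI (β := β) (μ₀ := μ₀) (b₀ := b₀) (ψ := ψ) (by linarith : (0:ℝ) < α) hs0
  have hsplit1 : s ^ (β.re + α) = s ^ β.re * s ^ α := Real.rpow_add hs0 _ _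
  have hsplit2 : s ^ (β.re + 1) = s ^ β.re * s := by
    rw [Real.rpow_add hs0, Real.rpow_one]
  have hnn : (0:ℝ) ≤ s ^ β.re * Real.exp (-(a₀ * s ^ α + c₀ * s)) := by positivity
  calc ‖PI α β μ₀ b₀ ψ s‖ * (s ^ β.re * Real.exp (E0 - _ * s ^ α - _ * s))
      ≤ (‖β+1‖ + α * ‖μ₀‖ * s ^ α + ‖b₀‖ * s) *
        (s ^ β.re * (Real.exp E0 * Real.exp (-(a₀ * s ^ α + c₀ * s)))) := by
        refine mul_le_mul hP (mul_le_mul_of_nonneg_left hexp (Real.rpow_nonneg hs0.le _))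
          (by positivity) (by positivity)
    _ = Real.exp E0 * (‖β+1‖ * (s ^ β.re * Real.exp (-(a₀ * s ^ α + c₀ * s)))
        + (α * ‖μ₀‖) * (s ^ (β.re + α) * Real.exp (-(a₀ * s ^ α + c₀ * s)))
        + ‖b₀‖ * (s ^ (β.re + 1) * Real.exp (-(a₀ * s ^ α + c₀ * s)))) := by
        rw [hsplit1, hsplit2]; ring

end


section
variable {α : ℝ} {β μ₀ b₀ : ℂ} {ψ a₀ c₀ : ℝ}

lemma ftc_zero (hα : 1 < α) (hβ : -1 < β.re) (ha₀ : 0 ≤ a₀) (hac : 0 < a₀ ∨ 0 < c₀)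
    (hμ : a₀ ≤ (μ₀ * Complex.exp (↑(α*ψ) * Complex.I)).re)
    (hb : c₀ ≤ (b₀ * Complex.exp (↑ψ * Complex.I)).re) :
    ∫ s in Ioi (0:ℝ), PI α β μ₀ b₀ ψ s * fI α β μ₀ b₀ ψ s = 0 := by
  have hβne : β ≠ -1 := by
    intro h; rw [h] at hβ; norm_num at hβ
  have hβ1ne : β + 1 ≠ 0 := fun h => hβne (by linear_combination h)
  set μe : ℂ := μ₀ * Complex.exp (↑(α*ψ) * Complex.I) with hμe
  set be : ℂ := b₀ * Complex.exp (↑ψ * Complex.I) with hbe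
  set G : ℝ → ℂ := fun s => (β+1) * (↑ψ * Complex.I) - μe * ↑(s ^ α) - be * ↑s with hG
  set h : ℝ → ℂ := fun s => (s:ℂ) ^ (β+1) * Complex.exp (G s) with hh
  have hf_eq : ∀ s : ℝ, fI α β μ₀ b₀ ψ s = (s:ℂ) ^ β * Complex.exp (G s) := fun s => rfl
  -- derivative of h on Ioi 0
  have hderiv : ∀ s ∈ Ioi (0:ℝ), HasDerivAt h (PI α β μ₀ b₀ ψ s * fI α β μ₀ b₀ ψ s) s := by
    intro s hs
    have hs0 : (0:ℝ) < s := hs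
    have hu : HasDerivAt (fun y : ℝ => ((y:ℂ)) ^ (β+1)) ((β+1) * (s:ℂ) ^ β) s := by
      have h' := (hasDerivAt_ofReal_cpow_const' (ne_of_gt hs0) hβne).const_mul (β+1)
      refine h'.congr_of_eventuallyEq (Filter.Eventually.of_forall fun y => ?_)
      field_simp
    have hG1 : HasDerivAt (fun y : ℝ => ((y ^ α : ℝ) : ℂ)) (↑(α * s ^ (α-1))) s :=
      (Real.hasDerivAt_rpow_const (Or.inl (ne_of_gt hs0))).ofReal_comp
    have hG2 : HasDerivAt (fun y : ℝ => ((y : ℝ) : ℂ)) 1 s := by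
      simpa using (hasDerivAt_id s).ofReal_comp
    have hGd : HasDerivAt G (-(μe * ↑(α * s ^ (α-1))) - be) s := by
      have := ((hasDerivAt_const s ((β+1) * (↑ψ * Complex.I))).sub
        (hG1.const_mul μe)).sub (hG2.const_mul be)
      simp only [zero_sub, mul_one] at this
      exact this
    have hv : HasDerivAt (fun y : ℝ => Complex.exp (G y))
        (Complex.exp (G s) * (-(μe * ↑(α * s ^ (α-1))) - be)) s := hGd.cexp
    have hmul := hu.mul hv
    have hcpow : ((s:ℂ)) ^ (β+1) = (s:ℂ) ^ β * (s:ℂ) := by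
      rw [Complex.cpow_add _ _ (Complex.ofReal_ne_zero.mpr (ne_of_gt hs0)), Complex.cpow_one]
    have hpow' : ((s:ℂ)) * ↑(α * s ^ (α-1)) = ↑α * ↑(s ^ α) := by
      have hre : s * (α * s ^ (α-1)) = α * s ^ α := by
        have : s ^ α = s ^ (α-1) * s := by
          nth_rewrite 1 [show α = (α - 1) + 1 by ring]
          rw [Real.rpow_add_one (ne_of_gt hs0)]
        rw [this]; ring
      calc ((s:ℂ)) * ↑(α * s ^ (α-1)) = ((s * (α * s ^ (α-1)) : ℝ) : ℂ) := by push_cast; ring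
        _ = ↑(α * s ^ α) := by rw [hre]
        _ = ↑α * ↑(s ^ α) := by push_cast; ring
    refine hmul.congr_deriv (Eq.symm ?_)
    rw [hf_eq, hcpow]
    show ((β+1) - ↑α * μe * ↑(s ^ α) - be * ↑s) * ((s:ℂ) ^ β * Complex.exp (G s)) = _
    linear_combination (μe * (s:ℂ) ^ β * Complex.exp (G s)) * hpow'
  -- continuity at 0
  have hcont : ContinuousWithinAt h (Ici (0:ℝ)) 0 := by
    have h0 : h 0 = 0 := by
      simp [hh, Complex.zero_cpow hβ1ne]
    rw [ContinuousWithinAt, h0]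
    apply squeeze_zero_norm'
      (a := fun s => (Real.exp (((β+1) * (↑ψ * Complex.I)).re + ‖μe‖ + ‖be‖)) * s ^ (β.re + 1))
    · filter_upwards [Icc_mem_nhdsGE_of_mem (by constructor <;> norm_num :
        (0:ℝ) ∈ Ico (0:ℝ) 1)] with s hsI
      rcases eq_or_lt_of_le hsI.1 with h0' | hs0
      · simp [hh, ← h0', Complex.zero_cpow hβ1ne, Real.zero_rpow (by linarith : β.re + 1 ≠ 0)]
      · have hs1 : s ≤ 1 := hsI.2
        have : ‖h s‖ = s ^ (β.re+1) * Real.exp ((G s).re) := by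
          rw [hh, norm_mul,
            Complex.norm_cpow_eq_rpow_re_of_pos hs0, Complex.norm_exp]
          norm_num
        rw [this]
        have hGre : (G s).re ≤ ((β+1) * (↑ψ * Complex.I)).re + ‖μe‖ + ‖be‖ := by
          have e1 : (G s).re = ((β+1) * (↑ψ * Complex.I)).re - μe.re * s ^ α - be.re * s := by
            simp [hG, Complex.sub_re, re_mul_ofReal]
          rw [e1]
          have hsα1 : s ^ α ≤ 1 :=
            Real.rpow_le_one hs0.le hs1 (by linarith)
          have b1 : |μe.re * s ^ α| ≤ ‖μe‖ := by
            rw [abs_mul]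
            have := Complex.abs_re_le_norm μe
            have hrn : |s ^ α| ≤ 1 := by
              rw [abs_of_nonneg (Real.rpow_nonneg hs0.le α)]; exact hsα1
            calc |μe.re| * |s ^ α| ≤ ‖μe‖ * 1 := by
                  exact mul_le_mul (by simpa using this) hrn
                    (abs_nonneg _) (norm_nonneg _)
              _ = ‖μe‖ := mul_one _
          have b2 : |be.re * s| ≤ ‖be‖ := by
            rw [abs_mul]
            have := Complex.abs_re_le_norm be
            calc |be.re| * |s| ≤ ‖be‖ * 1 := by
                  refine mul_le_mul (by simpa using this) ?_
                    (abs_nonneg _) (norm_nonneg _)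
                  rw [abs_of_nonneg hs0.le]; exact hs1
              _ = ‖be‖ := mul_one _
          have := abs_le.mp b1
          have := abs_le.mp b2
          linarith [(abs_le.mp b1).1, (abs_le.mp b2).1]
        calc s ^ (β.re+1) * Real.exp ((G s).re)
            ≤ s ^ (β.re+1) * Real.exp (((β+1) * (↑ψ * Complex.I)).re + ‖μe‖ + ‖be‖) :=
              mul_le_mul_of_nonneg_left (Real.exp_le_exp.mpr hGre) (Real.rpow_nonneg hs0.le _)
          _ = _ := by ring
    · have : Tendsto (fun s : ℝ => s ^ (β.re + 1)) (nhdsWithin 0 (Ici (0:ℝ))) (nhds 0) := by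
        have hc := (Real.continuousAt_rpow_const 0 (β.re+1)
          (Or.inr (by linarith))).continuousWithinAt (s := Ici (0:ℝ))
        rw [ContinuousWithinAt] at hc
        simpa [Real.zero_rpow (by linarith : β.re + 1 ≠ 0)] using hc
      simpa using this.const_mul (Real.exp (((β+1) * (↑ψ * Complex.I)).re + ‖μe‖ + ‖be‖))
  -- tendsto at top
  have htop : Tendsto h atTop (nhds 0) := by
    obtain ⟨b', C, hb', hC, hbd⟩ := lower_bound hα ha₀ hac
    set E0 : ℝ := ((β+1) * (↑ψ * Complex.I)).re with hE0
    apply squeeze_zero_norm' (a := fun s =>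
      (Real.exp (E0 + C)) * (s ^ (β.re+1) * Real.exp (-(b' * s))))
    · filter_upwards [Ioi_mem_atTop (0:ℝ)] with s hs0
      have hs0 : (0:ℝ) < s := hs0
      have hnorm : ‖h s‖ = s ^ (β.re+1) * Real.exp ((G s).re) := by
        rw [hh, norm_mul,
          Complex.norm_cpow_eq_rpow_re_of_pos hs0, Complex.norm_exp]
        norm_num
      rw [hnorm]
      have e1 : (G s).re = E0 - μe.re * s ^ α - be.re * s := by
        simp [hG, hE0, Complex.sub_re, re_mul_ofReal]
      have h1 : a₀ * s ^ α ≤ μe.re * s ^ α :=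
        mul_le_mul_of_nonneg_right hμ (Real.rpow_nonneg hs0.le α)
      have h2 : c₀ * s ≤ be.re * s := mul_le_mul_of_nonneg_right hb hs0.le
      have h3 : (G s).re ≤ E0 + C - b' * s := by
        have := hbd s hs0; rw [e1]; linarith
      calc s ^ (β.re+1) * Real.exp ((G s).re)
          ≤ s ^ (β.re+1) * Real.exp (E0 + C - b' * s) :=
            mul_le_mul_of_nonneg_left (Real.exp_le_exp.mpr h3) (Real.rpow_nonneg hs0.le _)
        _ = Real.exp (E0 + C) * (s ^ (β.re+1) * Real.exp (-(b' * s))) := by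
            rw [show E0 + C - b' * s = (E0 + C) + -(b' * s) by ring, Real.exp_add]; ring
    · have := tendsto_rpow_mul_exp_neg_mul_atTop_nhds_zero (β.re+1) b' hb'
      simpa using this.const_mul (Real.exp (E0 + C))
  have hint := integrable_PIfI hα hβ ha₀ hac hμ hb
  have := integral_Ioi_of_hasDerivAt_of_tendsto hcont hderiv hint htop
  rw [this]
  simp [hh, Complex.zero_cpow hβ1ne]

end


section
variable {α : ℝ} {β μ₀ b₀ : ℂ} {a₀ c₀ : ℝ}

lemma gbound_int (hα : 1 < α) (hβ : -1 < β.re) (ha₀ : 0 ≤ a₀) (hac : 0 < a₀ ∨ 0 < c₀) (B : ℝ) :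
    IntegrableOn (fun s : ℝ => Real.exp B *
      (‖β+1‖ * (s ^ β.re * Real.exp (-(a₀ * s ^ α + c₀ * s)))
        + (α * ‖μ₀‖) * (s ^ (β.re + α) * Real.exp (-(a₀ * s ^ α + c₀ * s)))
        + ‖b₀‖ * (s ^ (β.re + 1) * Real.exp (-(a₀ * s ^ α + c₀ * s))))) (Ioi (0:ℝ)) := by
  refine Integrable.const_mul (Integrable.add (Integrable.add ?_ ?_) ?_) _
  · exact (int_main hα hβ ha₀ hac).const_mul _
  · exact (int_main hα (by linarith) ha₀ hac).const_mul _
  · exact (int_main hα (by linarith) ha₀ hac).const_mul _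

lemma key_bound (hα : 1 < α) {t B : ℝ}
    (hμ : a₀ ≤ (μ₀ * Complex.exp (↑(α*t) * Complex.I)).re)
    (hb : c₀ ≤ (b₀ * Complex.exp (↑t * Complex.I)).re)
    (hB : ((β+1) * (↑t * Complex.I)).re ≤ B) {s : ℝ} (hs0 : 0 < s) :
    ‖PI α β μ₀ b₀ t s * fI α β μ₀ b₀ t s‖ ≤ Real.exp B *
      (‖β+1‖ * (s ^ β.re * Real.exp (-(a₀ * s ^ α + c₀ * s)))
        + (α * ‖μ₀‖) * (s ^ (β.re + α) * Real.exp (-(a₀ * s ^ α + c₀ * s)))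
        + ‖b₀‖ * (s ^ (β.re + 1) * Real.exp (-(a₀ * s ^ α + c₀ * s)))) := by
  rw [norm_mul, norm_fI hs0]
  have hexp : Real.exp (((β+1) * (↑t * Complex.I)).re
      - (μ₀ * Complex.exp (↑(α*t) * Complex.I)).re * s ^ α
      - (b₀ * Complex.exp (↑t * Complex.I)).re * s)
      ≤ Real.exp B * Real.exp (-(a₀ * s ^ α + c₀ * s)) := by
    rw [← Real.exp_add, Real.exp_le_exp]
    have h1 : a₀ * s ^ α ≤ (μ₀ * Complex.exp (↑(α*t) * Complex.I)).re * s ^ α :=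
      mul_le_mul_of_nonneg_right hμ (Real.rpow_nonneg hs0.le α)
    have h2 : c₀ * s ≤ (b₀ * Complex.exp (↑t * Complex.I)).re * s :=
      mul_le_mul_of_nonneg_right hb hs0.le
    linarith
  have hP := norm_PI (β := β) (μ₀ := μ₀) (b₀ := b₀) (ψ := t) (by linarith : (0:ℝ) < α) hs0
  have hsplit1 : s ^ (β.re + α) = s ^ β.re * s ^ α := Real.rpow_add hs0 _ _
  have hsplit2 : s ^ (β.re + 1) = s ^ β.re * s := by
    rw [Real.rpow_add hs0, Real.rpow_one]
  calc ‖PI α β μ₀ b₀ t s‖ * (s ^ β.re * Real.exp (_ - _ * s ^ α - _ * s))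
      ≤ (‖β+1‖ + α * ‖μ₀‖ * s ^ α + ‖b₀‖ * s) *
        (s ^ β.re * (Real.exp B * Real.exp (-(a₀ * s ^ α + c₀ * s)))) := by
        refine mul_le_mul hP (mul_le_mul_of_nonneg_left hexp (Real.rpow_nonneg hs0.le _))
          (by positivity) (by positivity)
    _ = Real.exp B * (‖β+1‖ * (s ^ β.re * Real.exp (-(a₀ * s ^ α + c₀ * s)))
        + (α * ‖μ₀‖) * (s ^ (β.re + α) * Real.exp (-(a₀ * s ^ α + c₀ * s)))
        + ‖b₀‖ * (s ^ (β.re + 1) * Real.exp (-(a₀ * s ^ α + c₀ * s)))) := by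
        rw [hsplit1, hsplit2]; ring

lemma hasDerivAt_fI_param {s : ℝ} (hs0 : 0 < s) (t : ℝ) :
    HasDerivAt (fun t : ℝ => fI α β μ₀ b₀ t s)
      (Complex.I * (PI α β μ₀ b₀ t s * fI α β μ₀ b₀ t s)) t := by
  have d1 : HasDerivAt (fun t : ℝ => (β+1) * ((t:ℂ) * Complex.I)) ((β+1) * Complex.I) t := by
    have := ((hasDerivAt_id t).ofReal_comp (z := t)).mul_const Complex.I
    simpa using this.const_mul (β+1)
  have d2 : HasDerivAt (fun t : ℝ => Complex.exp (↑(α*t) * Complex.I))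
      (Complex.exp (↑(α*t) * Complex.I) * (↑α * Complex.I)) t := by
    have hinner : HasDerivAt (fun t : ℝ => (↑(α*t) : ℂ) * Complex.I) (↑α * Complex.I) t := by
      have h0 : HasDerivAt (fun t : ℝ => α * t) α t := by
        simpa using (hasDerivAt_id t).const_mul α
      exact (h0.ofReal_comp).mul_const Complex.I
    exact hinner.cexp
  have d3 : HasDerivAt (fun t : ℝ => Complex.exp ((t:ℂ) * Complex.I))
      (Complex.exp ((t:ℂ) * Complex.I) * Complex.I) t := by
    have hinner : HasDerivAt (fun t : ℝ => (t:ℂ) * Complex.I) Complex.I t := by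
      simpa using ((hasDerivAt_id t).ofReal_comp (z := t)).mul_const Complex.I
    exact hinner.cexp
  have hGd : HasDerivAt (fun t : ℝ => (β+1) * ((t:ℂ) * Complex.I)
      - μ₀ * Complex.exp (↑(α*t) * Complex.I) * ↑(s ^ α)
      - b₀ * Complex.exp ((t:ℂ) * Complex.I) * ↑s)
      ((β+1) * Complex.I
        - μ₀ * (Complex.exp (↑(α*t) * Complex.I) * (↑α * Complex.I)) * ↑(s ^ α)
        - b₀ * (Complex.exp ((t:ℂ) * Complex.I) * Complex.I) * ↑s) t :=
    (d1.sub ((d2.const_mul μ₀).mul_const _)).sub ((d3.const_mul b₀).mul_const _)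
  have := (hGd.cexp).const_mul ((s:ℂ) ^ β)
  refine this.congr_deriv (Eq.symm ?_)
  rw [PI, fI]
  ring
end


section
variable {α : ℝ} {β μ₀ b₀ : ℂ} {a₀ c₀ : ℝ}

lemma hasDerivAt_I (hα : 1 < α) (hβ : -1 < β.re) (ha₀ : 0 ≤ a₀) (hac : 0 < a₀ ∨ 0 < c₀)
    {l u : ℝ}
    (hμU : ∀ ψ' ∈ Ioo l u, a₀ ≤ (μ₀ * Complex.exp (↑(α*ψ') * Complex.I)).re)
    (hbU : ∀ ψ' ∈ Ioo l u, c₀ ≤ (b₀ * Complex.exp (↑ψ' * Complex.I)).re)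
    {ψ : ℝ} (hψ : ψ ∈ Ioo l u) :
    HasDerivAt (fun t => ∫ s in Ioi (0:ℝ), fI α β μ₀ b₀ t s) 0 ψ := by
  set B : ℝ := ‖β+1‖ * (|l| + |u|) with hB
  set ε : ℝ := min (u - ψ) (ψ - l) with hε
  have hε0 : 0 < ε := lt_min (by linarith [hψ.2]) (by linarith [hψ.1])
  have hball : Metric.ball ψ ε ⊆ Ioo l u := by
    intro x hx
    rw [Real.ball_eq_Ioo] at hx
    constructor
    · calc l = ψ - (ψ - l) := by ring
        _ ≤ ψ - ε := by have := min_le_right (u - ψ) (ψ - l); linarith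
        _ < x := hx.1
    · calc x < ψ + ε := hx.2
        _ ≤ ψ + (u - ψ) := by have := min_le_left (u - ψ) (ψ - l); linarith
        _ = u := by ring
  have hBbd : ∀ t ∈ Ioo l u, ((β+1) * ((t:ℂ) * Complex.I)).re ≤ B := by
    intro t ht
    have h1 : ((β+1) * ((t:ℂ) * Complex.I)).re ≤ ‖(β+1) * ((t:ℂ) * Complex.I)‖ :=
      Complex.re_le_norm _
    have h2 : ‖(β+1) * ((t:ℂ) * Complex.I)‖ = ‖β+1‖ * |t| := by
      simp [norm_mul, Complex.norm_real]
    have h3 : |t| ≤ |l| + |u| := by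
      rw [abs_le]
      constructor
      · have := neg_abs_le l; linarith [ht.1, abs_nonneg u]
      · have := le_abs_self u; linarith [ht.2, abs_nonneg l]
    calc ((β+1) * ((t:ℂ) * Complex.I)).re ≤ ‖β+1‖ * |t| := by rw [← h2]; exact h1
      _ ≤ ‖β+1‖ * (|l| + |u|) := mul_le_mul_of_nonneg_left h3 (norm_nonneg _)
  have main := hasDerivAt_integral_of_dominated_loc_of_deriv_le (μ := volume.restrict (Ioi 0))
    (F := fun t s => fI α β μ₀ b₀ t s)
    (F' := fun t s => Complex.I * (PI α β μ₀ b₀ t s * fI α β μ₀ b₀ t s))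
    (x₀ := ψ)
    (bound := fun s => Real.exp B *
      (‖β+1‖ * (s ^ β.re * Real.exp (-(a₀ * s ^ α + c₀ * s)))
        + (α * ‖μ₀‖) * (s ^ (β.re + α) * Real.exp (-(a₀ * s ^ α + c₀ * s)))
        + ‖b₀‖ * (s ^ (β.re + 1) * Real.exp (-(a₀ * s ^ α + c₀ * s)))))
    (Metric.ball_mem_nhds ψ hε0)
    (Filter.Eventually.of_forall fun t => contOn_fI.aestronglyMeasurable measurableSet_Ioi)
    (integrable_fI hα hβ ha₀ hac (hμU ψ hψ) (hbU ψ hψ))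
    ((contOn_PIfI.aestronglyMeasurable measurableSet_Ioi).const_mul Complex.I)
    ?_ ?_ ?_
  · have heq : (∫ s in Ioi (0:ℝ), Complex.I * (PI α β μ₀ b₀ ψ s * fI α β μ₀ b₀ ψ s)) = 0 := by
      rw [MeasureTheory.integral_const_mul,
        ftc_zero hα hβ ha₀ hac (hμU ψ hψ) (hbU ψ hψ), mul_zero]
    rw [heq] at main
    exact main.2
  · filter_upwards [ae_restrict_mem measurableSet_Ioi] with s hs
    intro t ht
    have htU := hball ht
    rw [norm_mul, Complex.norm_I, one_mul]
    exact key_bound hα (hμU t htU) (hbU t htU) (hBbd t htU) hs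
  · exact gbound_int hα hβ ha₀ hac B
  · filter_upwards [ae_restrict_mem measurableSet_Ioi] with s hs
    intro t _
    exact hasDerivAt_fI_param hs t

lemma rot (hα : 1 < α) (hβ : -1 < β.re) (ha₀ : 0 ≤ a₀) (hac : 0 < a₀ ∨ 0 < c₀)
    {l u : ℝ}
    (hμU : ∀ ψ' ∈ Ioo l u, a₀ ≤ (μ₀ * Complex.exp (↑(α*ψ') * Complex.I)).re)
    (hbU : ∀ ψ' ∈ Ioo l u, c₀ ≤ (b₀ * Complex.exp (↑ψ' * Complex.I)).re)
    {ψa ψb : ℝ} (hψa : ψa ∈ Ioo l u) (hψb : ψb ∈ Ioo l u) :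
    (∫ s in Ioi (0:ℝ), fI α β μ₀ b₀ ψa s) = ∫ s in Ioi (0:ℝ), fI α β μ₀ b₀ ψb s := by
  have h0 : ∀ t ∈ uIcc ψa ψb, HasDerivAt (fun t => ∫ s in Ioi (0:ℝ), fI α β μ₀ b₀ t s) 0 t :=
    fun t ht => hasDerivAt_I hα hβ ha₀ hac hμU hbU
      ((Set.ordConnected_Ioo.uIcc_subset hψa hψb) ht)
  have h1 := intervalIntegral.integral_eq_sub_of_hasDerivAt h0
    (intervalIntegrable_const (c := (0:ℂ)))
  simp only [intervalIntegral.integral_const, smul_zero] at h1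
  linear_combination h1
end


section
variable {α : ℝ} {β : ℂ}

lemma gamma_complex (hα : 1 < α) (hβ : -1 < β.re) {b : ℂ} (hb : 0 < b.re) :
    (∫ s in Ioi (0:ℝ), (s:ℂ) ^ β * Complex.exp (-(b * s)))
      = Complex.Gamma (β+1) * b ^ (-(β+1)) := by
  have hbne : b ≠ 0 := fun h => by rw [h] at hb; simp at hb
  have habs : 0 < ‖b‖ := norm_pos_iff.mpr hbne
  set A : ℝ := Complex.arg b with hA
  have hAlt : |A| < Real.pi/2 := Complex.abs_arg_lt_pi_div_two_iff.mpr (Or.inl hb)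
  set η : ℝ := (Real.pi/2 - |A|)/2 with hη
  have hη0 : 0 < η := by rw [hη]; linarith
  set l : ℝ := min 0 (-A) - η with hl
  set u : ℝ := max 0 (-A) + η with hu
  have hcpos : 0 < Real.cos (|A| + η) := by
    apply Real.cos_pos_of_mem_Ioo
    constructor
    · have := abs_nonneg A; linarith [Real.pi_pos]
    · rw [hη]; linarith
  set c₀ : ℝ := ‖b‖ * Real.cos (|A| + η) with hc₀
  have hc₀pos : 0 < c₀ := mul_pos habs hcpos
  have hminlb : -|A| - A ≤ min 0 (-A) :=
    le_min (by linarith [neg_abs_le A]) (by linarith [abs_nonneg A])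
  have hmaxub : max 0 (-A) ≤ |A| - A :=
    max_le (by linarith [le_abs_self A]) (by linarith [abs_nonneg A])
  have hbU : ∀ ψ' ∈ Ioo l u, c₀ ≤ (b * Complex.exp (↑ψ' * Complex.I)).re := by
    intro ψ' hψ'
    have hrot : b * Complex.exp (↑ψ' * Complex.I)
        = ↑(‖b‖) * Complex.exp (↑(A + ψ') * Complex.I) := by
      conv_lhs => rw [← Complex.norm_mul_exp_arg_mul_I b]
      rw [mul_assoc, ← Complex.exp_add, ← hA]
      congr 1
      push_cast
      ring
    have hre : (↑(‖b‖) * Complex.exp (↑(A + ψ') * Complex.I)).re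
        = ‖b‖ * Real.cos (A + ψ') := by
      rw [mul_comm, re_mul_ofReal, Complex.exp_ofReal_mul_I_re, mul_comm]
    rw [hrot, hre]
    have hAψ : |A + ψ'| ≤ |A| + η := by
      rw [abs_le]
      constructor
      · have h1 := hψ'.1
        rw [hl] at h1
        linarith
      · have h2 := hψ'.2
        rw [hu] at h2
        linarith
    have hcos : Real.cos (|A| + η) ≤ Real.cos (A + ψ') := by
      rw [← Real.cos_abs (A + ψ')]
      exact Real.cos_le_cos_of_nonneg_of_le_pi (abs_nonneg _)
        (by linarith [Real.pi_pos, abs_nonneg A]) hAψ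
    exact mul_le_mul_of_nonneg_left hcos habs.le
  have hμU : ∀ ψ' ∈ Ioo l u, (0:ℝ) ≤ ((0:ℂ) * Complex.exp (↑(α*ψ') * Complex.I)).re := by
    intro ψ' _; simp
  have h0mem : (0:ℝ) ∈ Ioo l u := by
    constructor
    · rw [hl]; have := min_le_left 0 (-A); linarith
    · rw [hu]; have := le_max_left 0 (-A); linarith
  have hAmem : -A ∈ Ioo l u := by
    constructor
    · rw [hl]; have := min_le_right 0 (-A); linarith
    · rw [hu]; have := le_max_right 0 (-A); linarith
  have hrotmain := rot (μ₀ := (0:ℂ)) (b₀ := b) hα hβ le_rfl (Or.inr hc₀pos)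
    hμU hbU h0mem hAmem
  have e0 : (∫ s in Ioi (0:ℝ), fI α β 0 b 0 s)
      = ∫ s in Ioi (0:ℝ), (s:ℂ) ^ β * Complex.exp (-(b * s)) := by
    refine setIntegral_congr_fun measurableSet_Ioi fun s _ => ?_
    rw [fI]
    norm_num
  have hGammaInt : (∫ s in Ioi (0:ℝ), (s:ℂ) ^ β
        * Complex.exp (-(↑(‖b‖) * ↑s)))
      = (1 / (‖b‖ : ℂ)) ^ (β+1) * Complex.Gamma (β+1) := by
    have := Complex.integral_cpow_mul_exp_neg_mul_Ioi
      (a := β+1) (r := ‖b‖) (by simp only [Complex.add_re, Complex.one_re]; linarith) habs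
    simpa [add_sub_cancel_right] using this
  have hbrot : b * Complex.exp (↑(-A) * Complex.I) = ↑(‖b‖) := by
    conv_lhs => rw [← Complex.norm_mul_exp_arg_mul_I b]
    rw [mul_assoc, ← Complex.exp_add, ← hA,
      show (↑A * Complex.I + ↑(-A) * Complex.I : ℂ) = 0 by push_cast; ring,
      Complex.exp_zero, mul_one]
  have e1 : (∫ s in Ioi (0:ℝ), fI α β 0 b (-A) s)
      = Complex.exp ((β+1) * (↑(-A) * Complex.I))
          * ((1 / (‖b‖ : ℂ)) ^ (β+1) * Complex.Gamma (β+1)) := by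
    rw [← hGammaInt, ← MeasureTheory.integral_const_mul]
    refine setIntegral_congr_fun measurableSet_Ioi fun s _ => ?_
    rw [fI, hbrot]
    rw [show (β+1) * (↑(-A) * Complex.I) - (0:ℂ) * Complex.exp (↑(α*(-A)) * Complex.I) * ↑(s^α)
        - ↑(‖b‖) * ↑s
        = (β+1) * (↑(-A) * Complex.I) + -(↑(‖b‖) * ↑s) by ring, Complex.exp_add]
    ring
  rw [e0] at hrotmain
  rw [hrotmain, e1]
  -- final algebra
  have hbexp : Complex.exp (↑(Real.log (‖b‖)) + ↑A * Complex.I) = b := by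
    rw [Complex.exp_add, ← Complex.ofReal_exp, Real.exp_log habs]
    exact Complex.norm_mul_exp_arg_mul_I b
  have hlogb : Complex.log b = ↑(Real.log (‖b‖)) + ↑A * Complex.I := by
    conv_lhs => rw [← hbexp]
    rw [Complex.log_exp (by simpa [hA] using Complex.neg_pi_lt_arg b)
      (by simpa [hA] using Complex.arg_le_pi b)]
  have hbpow : b ^ (-(β+1)) = Complex.exp (Complex.log b * (-(β+1))) :=
    Complex.cpow_def_of_ne_zero hbne _
  have hinv : (1 / (‖b‖ : ℂ)) ^ (β+1)
      = Complex.exp (-(↑(Real.log (‖b‖)) : ℂ) * (β+1)) := by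
    have hne : (1 / (‖b‖ : ℂ)) ≠ 0 := by
      simp [Complex.ofReal_ne_zero.mpr habs.ne']
    rw [Complex.cpow_def_of_ne_zero hne]
    congr 1
    have : (1 / (‖b‖ : ℂ)) = ((1 / ‖b‖ : ℝ) : ℂ) := by push_cast; ring
    rw [this, ← Complex.ofReal_log (by positivity), one_div, Real.log_inv]
    push_cast
    ring
  rw [hbpow, hlogb, hinv, ← mul_assoc, ← Complex.exp_add, mul_comm]
  congr 2
  push_cast
  ring
end


lemma norm_exp_neg_sub_one_le {w : ℂ} (hw : 0 ≤ w.re) : ‖Complex.exp (-w) - 1‖ ≤ ‖w‖ := by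
  have key : ∀ t ∈ Set.uIcc (0:ℝ) 1,
      HasDerivAt (fun t : ℝ => Complex.exp (-(↑t * w))) (-w * Complex.exp (-(↑t * w))) t := by
    intro t _
    have h1 : HasDerivAt (fun t : ℝ => -((t:ℂ) * w)) (-w) t := by
      have := (((hasDerivAt_id t).ofReal_comp (z := t)).mul_const w).neg
      simp only [id, Complex.ofReal_one, one_mul] at this
      exact this
    simpa [mul_comm] using h1.cexp
  have hcont : Continuous (fun t : ℝ => -w * Complex.exp (-(↑t * w))) :=
    continuous_const.mul (Complex.continuous_exp.comp
      ((Complex.continuous_ofReal.mul continuous_const).neg))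
  have h2 := intervalIntegral.integral_eq_sub_of_hasDerivAt key
    (hcont.intervalIntegrable 0 1)
  simp only [Complex.ofReal_one, Complex.ofReal_zero, one_mul, zero_mul, neg_zero,
    Complex.exp_zero] at h2
  rw [show Complex.exp (-w) - 1 = ∫ t in (0:ℝ)..1, -w * Complex.exp (-(↑t * w)) from h2.symm]
  have h3 := intervalIntegral.norm_integral_le_of_norm_le_const
    (C := ‖w‖) (a := (0:ℝ)) (b := 1)
    (f := fun t : ℝ => -w * Complex.exp (-(↑t * w))) ?_
  · simpa using h3
  · intro t ht
    rw [Set.uIoc_of_le (by norm_num : (0:ℝ) ≤ 1)] at ht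
    rw [norm_mul, norm_neg]
    have : ‖Complex.exp (-(↑t * w))‖ ≤ 1 := by
      rw [Complex.norm_exp]
      have : (-(↑t * w) : ℂ).re = -(t * w.re) := by simp [re_mul_ofReal]
      rw [this]
      exact Real.exp_le_one_iff.mpr (by nlinarith [ht.1.le])
    calc ‖w‖ * ‖Complex.exp (-(↑t * w))‖ ≤ ‖w‖ * 1 :=
          mul_le_mul_of_nonneg_left this (norm_nonneg _)
      _ = ‖w‖ := mul_one _


end Stmt5

open Stmt5

/-- First-order asymptotics of `G_{α,β}` in the sector
`−π − π/α < arg z < 0`, uniformly on closed subsectors. -/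
theorem stmt_5 (α : ℝ) (hα : 1 < α) (β : ℂ) (hβ : -1 < β.re) :
    ∀ ε : ℝ, 0 < ε → ∃ K R₀ : ℝ, 0 < K ∧ 0 < R₀ ∧
      ∀ R : ℝ, R₀ ≤ R → ∀ θ : ℝ,
        -Real.pi - Real.pi / α + ε ≤ θ → θ ≤ -ε →
        ‖Gab α β (R * Complex.exp (Complex.I * θ)) -
            Complex.exp (-(Complex.I * (θ + Real.pi / 2) * (β + 1))) *
              Complex.Gamma (β + 1) * (R : ℂ) ^ (-(β + 1))‖
          ≤ K * R ^ (-β.re - α - 1) := by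
  intro ε hε
  have hα0 : (0:ℝ) < α := by linarith
  have hπ : 0 < Real.pi := Real.pi_pos
  have hπ2α : 0 < Real.pi / (2*α) := by positivity
  set ε' : ℝ := min ε (min (Real.pi/(2*α)) 1) / 2 with hε'def
  have hε'0 : 0 < ε' := by
    rw [hε'def]
    exact div_pos (lt_min hε (lt_min hπ2α one_pos)) two_pos
  have hε'ε : ε' ≤ ε := by
    rw [hε'def]
    have := min_le_left ε (min (Real.pi/(2*α)) 1)
    linarith
  have hε'small : 2*ε' ≤ Real.pi/(2*α) := by
    rw [hε'def]
    have h1 := min_le_right ε (min (Real.pi/(2*α)) 1)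
    have h2 := min_le_left (Real.pi/(2*α)) 1
    linarith
  have hε'1 : 2*ε' ≤ 1 := by
    rw [hε'def]
    have h1 := min_le_right ε (min (Real.pi/(2*α)) 1)
    have h2 := min_le_right (Real.pi/(2*α)) 1
    linarith
  set δ : ℝ := ε'/2 with hδdef
  have hδ0 : 0 < δ := by rw [hδdef]; linarith
  have hδπ : δ < Real.pi/(2*α) := by rw [hδdef]; linarith
  set L : ℝ := Real.pi/(2*α) - δ with hLdef
  have hL0 : 0 < L := by rw [hLdef]; linarith
  have hαπ : α * (Real.pi/(2*α)) = Real.pi/2 := by field_simp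
  have hαδ : α * δ < Real.pi/2 := by
    have := mul_lt_mul_of_pos_left hδπ hα0
    linarith [hαπ]
  set a₀ : ℝ := Real.sin (α*δ/2) with ha₀def
  have ha₀pos : 0 < a₀ := by
    rw [ha₀def]
    apply Real.sin_pos_of_pos_of_lt_pi
    · positivity
    · nlinarith
  set m0 : ℝ := Real.sin (ε'/2) with hm0def
  have hm0pos : 0 < m0 := by
    rw [hm0def]
    apply Real.sin_pos_of_pos_of_lt_pi
    · linarith
    · nlinarith
  set p : ℝ := β.re + α + 1 with hpdef
  have hp0 : 0 < p := by rw [hpdef]; linarith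
  set K : ℝ := ‖Complex.exp (Complex.I * ↑Real.pi * (β+1)/(2*↑α))‖ *
      Real.exp (‖β+1‖ * Real.pi) * (Real.Gamma p * m0 ^ (-p)) with hKdef
  have hK0 : 0 < K := by
    rw [hKdef]
    have h1 : 0 < ‖Complex.exp (Complex.I * ↑Real.pi * (β+1)/(2*↑α))‖ :=
      norm_pos_iff.mpr (Complex.exp_ne_zero _)
    have h2 : 0 < Real.Gamma p := Real.Gamma_pos_of_pos hp0
    have h3 : 0 < m0 ^ (-p) := Real.rpow_pos_of_pos hm0pos _
    positivity
  clear_value K p m0 a₀ L δ ε'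
  refine ⟨K, 1, hK0, one_pos, ?_⟩
  intro R hR θ hθ1 hθ2
  have hR0 : 0 < R := lt_of_lt_of_le one_pos hR
  set φ : ℝ := θ + Real.pi/2 + Real.pi/(2*α) with hφ
  have hdiv : 2*(Real.pi/(2*α)) = Real.pi/α := by field_simp
  have hφub : φ ≤ Real.pi/2 + Real.pi/(2*α) - ε' := by rw [hφ]; linarith
  have hφlb : -(Real.pi/2 + Real.pi/(2*α)) + ε' ≤ φ := by rw [hφ]; linarith
  set ψ : ℝ := max (-L) (min L (-φ)) with hψdef
  clear_value φ ψ
  have hψabs : |ψ| ≤ L := by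
    rw [abs_le]
    constructor
    · rw [hψdef]; exact le_max_left _ _
    · rw [hψdef]
      exact max_le (by linarith) (min_le_left _ _)
  have hφψ : |φ + ψ| ≤ Real.pi/2 - ε'/2 := by
    have hε'4 : ε'/2 < Real.pi/2 := by nlinarith
    rcases le_total (-φ) (-L) with hc1 | hc1
    · have hψval : ψ = -L := by
        rw [hψdef, min_eq_right (le_trans hc1 (by linarith : -L ≤ L)), max_eq_left hc1]
      rw [hψval, abs_le]
      constructor
      · rw [hLdef]; linarith
      · rw [hLdef]; linarith
    · rcases le_total L (-φ) with hc2 | hc2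
      · have hψval : ψ = L := by
          rw [hψdef, min_eq_left hc2, max_eq_right (by linarith : -L ≤ L)]
        rw [hψval, abs_le]
        constructor
        · rw [hLdef]; linarith
        · rw [hLdef]; linarith
      · have hψval : ψ = -φ := by
          rw [hψdef, min_eq_right hc2, max_eq_right hc1]
        rw [hψval, abs_le]
        constructor
        · linarith
        · linarith
  -- complex setup
  set z : ℂ := ↑R * Complex.exp (Complex.I * ↑θ) with hzdef
  set b₀ : ℂ := Complex.I * Complex.exp (Complex.I * ↑Real.pi / (2 * ↑α)) * z with hb₀def
  clear_value z b₀
  have hIexp : Complex.exp (↑(Real.pi/2) * Complex.I) = Complex.I := by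
    rw [Complex.exp_mul_I, ← Complex.ofReal_cos, ← Complex.ofReal_sin,
      Real.cos_pi_div_two, Real.sin_pi_div_two]
    simp
  have hb₀ : b₀ = ↑R * Complex.exp (↑φ * Complex.I) := by
    rw [hb₀def, hzdef, hφ]
    rw [show (↑(θ + Real.pi/2 + Real.pi/(2*α)) * Complex.I : ℂ)
        = Complex.I * ↑θ + ↑(Real.pi/2) * Complex.I + Complex.I * ↑Real.pi / (2*↑α) by
      push_cast; ring]
    rw [Complex.exp_add, Complex.exp_add, hIexp]
    ring
  have hbre : ∀ ψ' : ℝ, (b₀ * Complex.exp (↑ψ' * Complex.I)).re = R * Real.cos (φ + ψ') := by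
    intro ψ'
    rw [hb₀, mul_assoc, ← Complex.exp_add,
      show (↑φ * Complex.I + ↑ψ' * Complex.I : ℂ) = ↑(φ+ψ') * Complex.I by push_cast; ring,
      mul_comm, re_mul_ofReal, Complex.exp_ofReal_mul_I_re, mul_comm]
  -- the open interval and hypotheses for the rotation
  have hμU : ∀ ψ' ∈ Ioo (-(Real.pi/(2*α) - δ/2)) (Real.pi/(2*α) - δ/2),
      a₀ ≤ ((1:ℂ) * Complex.exp (↑(α*ψ') * Complex.I)).re := by
    intro ψ' hψ'
    rw [one_mul, Complex.exp_ofReal_mul_I_re]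
    have habs' : |α*ψ'| ≤ Real.pi/2 - α*δ/2 := by
      rw [abs_mul, abs_of_pos hα0]
      have h1 : |ψ'| ≤ Real.pi/(2*α) - δ/2 := by
        rw [abs_le]; exact ⟨by linarith [hψ'.1], by linarith [hψ'.2]⟩
      have := mul_le_mul_of_nonneg_left h1 hα0.le
      calc α * |ψ'| ≤ α * (Real.pi/(2*α) - δ/2) := this
        _ = Real.pi/2 - α*δ/2 := by rw [mul_sub, hαπ]; ring
    have hcos : Real.cos (Real.pi/2 - α*δ/2) ≤ Real.cos (α*ψ') := by
      rw [← Real.cos_abs (α*ψ')]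
      apply Real.cos_le_cos_of_nonneg_of_le_pi (abs_nonneg _) _ habs'
      nlinarith
    rw [ha₀def]
    calc Real.sin (α*δ/2) = Real.cos (Real.pi/2 - α*δ/2) := (Real.cos_pi_div_two_sub _).symm
      _ ≤ Real.cos (α*ψ') := hcos
  have hbU : ∀ ψ' ∈ Ioo (-(Real.pi/(2*α) - δ/2)) (Real.pi/(2*α) - δ/2),
      -R ≤ (b₀ * Complex.exp (↑ψ' * Complex.I)).re := by
    intro ψ' _
    rw [hbre ψ']
    nlinarith [Real.neg_one_le_cos (φ + ψ'), hR0]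
  have h0U : (0:ℝ) ∈ Ioo (-(Real.pi/(2*α) - δ/2)) (Real.pi/(2*α) - δ/2) := by
    constructor <;> [linarith; linarith]
  have hψU : ψ ∈ Ioo (-(Real.pi/(2*α) - δ/2)) (Real.pi/(2*α) - δ/2) := by
    have h1 := abs_le.mp hψabs
    constructor
    · have : -(Real.pi/(2*α) - δ/2) < -L := by rw [hLdef]; linarith
      linarith [h1.1]
    · have : L < Real.pi/(2*α) - δ/2 := by rw [hLdef]; linarith
      linarith [h1.2]
  have hrot := rot (μ₀ := (1:ℂ)) (b₀ := b₀) hα hβ ha₀pos.le (Or.inl ha₀pos)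
    hμU hbU h0U hψU
  -- identification of Gab with the unrotated integral
  have hGab : Gab α β z = Complex.exp (Complex.I * ↑Real.pi * (β+1)/(2*↑α)) *
      ∫ s in Ioi (0:ℝ), fI α β 1 b₀ 0 s := by
    rw [Gab]
    congr 1
    refine setIntegral_congr_fun measurableSet_Ioi fun t _ => ?_
    rw [fI, hb₀def]
    congr 2
    simp only [mul_zero, Complex.ofReal_zero, zero_mul, Complex.exp_zero, one_mul, mul_one]
    ring
  -- second part: the Gamma integral
  set bψ : ℂ := b₀ * Complex.exp (↑ψ * Complex.I) with hbψdef
  clear_value bψ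
  have hbψre : R * m0 ≤ bψ.re := by
    rw [hbψdef, hbre ψ]
    have h1 := abs_le.mp hφψ
    have hcos : Real.cos (Real.pi/2 - ε'/2) ≤ Real.cos (φ + ψ) := by
      rw [← Real.cos_abs (φ + ψ)]
      apply Real.cos_le_cos_of_nonneg_of_le_pi (abs_nonneg _) _ hφψ
      linarith
    rw [Real.cos_pi_div_two_sub] at hcos
    rw [hm0def]
    exact mul_le_mul_of_nonneg_left hcos hR0.le
  have hbψpos : 0 < bψ.re := lt_of_lt_of_le (mul_pos hR0 hm0pos) hbψre
  set g : ℝ → ℂ := fun s => (s:ℂ)^β * Complex.exp ((β+1)*(↑ψ*Complex.I) - bψ * ↑s) with hgdef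
  have hgeq : ∀ s : ℝ, fI α β 0 b₀ ψ s = g s := by
    intro s
    rw [fI]
    simp only [hgdef]
    congr 2
    simp only [zero_mul, sub_zero, hbψdef]
  have hintf : IntegrableOn (fI α β 1 b₀ ψ) (Ioi (0:ℝ)) :=
    integrable_fI hα hβ ha₀pos.le (Or.inl ha₀pos) (hμU ψ hψU) (hbU ψ hψU)
  have hintg : IntegrableOn g (Ioi (0:ℝ)) := by
    have := integrable_fI (μ₀ := (0:ℂ)) (b₀ := b₀) (ψ := ψ) (a₀ := 0) (c₀ := R * m0)
      hα hβ le_rfl (Or.inr (mul_pos hR0 hm0pos)) (by simp)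
      (by rw [← hbψdef]; exact hbψre)
    exact this.congr_fun (fun s _ => hgeq s) measurableSet_Ioi
  have hsecond : (∫ s in Ioi (0:ℝ), g s)
      = Complex.exp ((β+1)*(↑ψ*Complex.I)) * (Complex.Gamma (β+1) * bψ ^ (-(β+1))) := by
    rw [← gamma_complex hα hβ hbψpos, ← MeasureTheory.integral_const_mul]
    refine setIntegral_congr_fun measurableSet_Ioi fun s _ => ?_
    simp only [hgdef]
    rw [show ((β+1)*(↑ψ*Complex.I) - bψ * ↑s : ℂ)
        = (β+1)*(↑ψ*Complex.I) + -(bψ * ↑s) by ring,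
      Complex.exp_add]
    ring
  -- main term identity
  have hRne : (R:ℂ) ≠ 0 := Complex.ofReal_ne_zero.mpr hR0.ne'
  have hbψR : bψ = ↑R * Complex.exp (↑(φ+ψ) * Complex.I) := by
    rw [hbψdef, hb₀, mul_assoc, ← Complex.exp_add]
    congr 1
    push_cast; ring
  have hbψexp : bψ = Complex.exp (↑(Real.log R) + ↑(φ+ψ) * Complex.I) := by
    rw [hbψR, Complex.exp_add, ← Complex.ofReal_exp, Real.exp_log hR0]
  have hbψne : bψ ≠ 0 := by rw [hbψexp]; exact Complex.exp_ne_zero _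
  have hφψπ := abs_le.mp hφψ
  have hlogbψ : Complex.log bψ = ↑(Real.log R) + ↑(φ+ψ) * Complex.I := by
    rw [hbψexp, Complex.log_exp]
    · simp only [Complex.add_im, Complex.ofReal_im, Complex.mul_im, Complex.ofReal_re,
        Complex.I_im, Complex.I_re, mul_zero, mul_one, zero_add]
      nlinarith [hφψπ.1, hε'0]
    · simp only [Complex.add_im, Complex.ofReal_im, Complex.mul_im, Complex.ofReal_re,
        Complex.I_im, Complex.I_re, mul_zero, mul_one, zero_add]
      nlinarith [hφψπ.2, hε'0]
  have hpow1 : bψ ^ (-(β+1))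
      = Complex.exp ((↑(Real.log R) + ↑(φ+ψ) * Complex.I) * (-(β+1))) := by
    rw [Complex.cpow_def_of_ne_zero hbψne, hlogbψ]
  have hpow2 : (R:ℂ) ^ (-(β+1)) = Complex.exp (↑(Real.log R) * (-(β+1))) := by
    rw [Complex.cpow_def_of_ne_zero hRne, ← Complex.ofReal_log hR0.le]
  have hexps : Complex.exp (Complex.I * ↑Real.pi * (β+1)/(2*↑α))
        * Complex.exp ((β+1)*(↑ψ*Complex.I))
        * Complex.exp ((↑(Real.log R) + ↑(φ+ψ) * Complex.I) * (-(β+1)))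
      = Complex.exp (-(Complex.I * (↑θ + ↑Real.pi/2) * (β+1)))
        * Complex.exp (↑(Real.log R) * (-(β+1))) := by
    rw [← Complex.exp_add, ← Complex.exp_add, ← Complex.exp_add]
    congr 1
    rw [hφ]
    push_cast
    ring
  have hmain : Complex.exp (Complex.I * ↑Real.pi * (β+1)/(2*↑α)) *
        (Complex.exp ((β+1)*(↑ψ*Complex.I)) * (Complex.Gamma (β+1) * bψ ^ (-(β+1))))
      = Complex.exp (-(Complex.I * (↑θ + ↑Real.pi/2) * (β+1))) *
          Complex.Gamma (β+1) * (R:ℂ) ^ (-(β+1)) := by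
    rw [hpow1, hpow2]
    linear_combination Complex.Gamma (β+1) * hexps
  -- the key difference formula
  have key : Gab α β z - Complex.exp (-(Complex.I * (↑θ + ↑Real.pi/2) * (β+1))) *
        Complex.Gamma (β+1) * (R:ℂ) ^ (-(β+1))
      = Complex.exp (Complex.I * ↑Real.pi * (β+1)/(2*↑α)) *
          ∫ s in Ioi (0:ℝ), (fI α β 1 b₀ ψ s - g s) := by
    rw [hGab, hrot, ← hmain, ← hsecond, ← mul_sub, ← integral_sub hintf hintg]
  -- pointwise bound
  have hdiffbd : ∀ s ∈ Ioi (0:ℝ), ‖fI α β 1 b₀ ψ s - g s‖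
      ≤ Real.exp (‖β+1‖ * Real.pi) * (s ^ (β.re + α) * Real.exp (-(R * m0 * s))) := by
    intro s hs
    have hs0 : (0:ℝ) < s := hs
    have hfact : fI α β 1 b₀ ψ s - g s
        = ((s:ℂ)^β * Complex.exp ((β+1)*(↑ψ*Complex.I) - bψ * ↑s))
          * (Complex.exp (-(Complex.exp (↑(α*ψ) * Complex.I) * ↑(s^α))) - 1) := by
      rw [fI]
      simp only [hgdef]
      rw [mul_sub, mul_one,
        show ((β+1)*(↑ψ*Complex.I) - 1 * Complex.exp (↑(α*ψ) * Complex.I) * ↑(s^α)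
            - b₀ * Complex.exp (↑ψ * Complex.I) * ↑s : ℂ)
          = ((β+1)*(↑ψ*Complex.I) - bψ * ↑s)
            + -(Complex.exp (↑(α*ψ) * Complex.I) * ↑(s^α)) by rw [hbψdef]; ring,
        Complex.exp_add]
      ring
    rw [hfact, norm_mul, norm_mul]
    have h1 : ‖(s:ℂ)^β‖ = s ^ β.re := by
      rw [Complex.norm_cpow_eq_rpow_re_of_pos hs0]
    have h2 : ‖Complex.exp ((β+1)*(↑ψ*Complex.I) - bψ * ↑s)‖
        ≤ Real.exp (‖β+1‖ * Real.pi) * Real.exp (-(R * m0 * s)) := by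
      rw [Complex.norm_exp, ← Real.exp_add, Real.exp_le_exp,
        Complex.sub_re]
      have e1 : (bψ * ↑s).re = bψ.re * s := re_mul_ofReal _ _
      have e2 : ((β+1)*(↑ψ*Complex.I)).re ≤ ‖β+1‖ * Real.pi := by
        calc ((β+1)*(↑ψ*Complex.I)).re ≤ ‖(β+1)*(↑ψ*Complex.I)‖ := Complex.re_le_norm _
          _ = ‖β+1‖ * |ψ| := by
            simp [norm_mul, Complex.norm_real]
          _ ≤ ‖β+1‖ * Real.pi := by
            apply mul_le_mul_of_nonneg_left _ (norm_nonneg _)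
            have := hψabs
            have hLπ : L ≤ Real.pi := by rw [hLdef]; nlinarith
            linarith
      have e3 : R * m0 * s ≤ (bψ * ↑s).re := by
        rw [e1]
        exact mul_le_mul_of_nonneg_right hbψre hs0.le
      linarith
    have h3 : ‖Complex.exp (-(Complex.exp (↑(α*ψ) * Complex.I) * ↑(s^α))) - 1‖
        ≤ s ^ α := by
      have hre : (0:ℝ) ≤ (Complex.exp (↑(α*ψ) * Complex.I) * ↑(s^α)).re := by
        rw [re_mul_ofReal, Complex.exp_ofReal_mul_I_re]
        have := hμU ψ hψU
        rw [one_mul, Complex.exp_ofReal_mul_I_re] at this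
        have : (0:ℝ) ≤ Real.cos (α*ψ) := le_trans ha₀pos.le this
        positivity
      have := norm_exp_neg_sub_one_le hre
      calc ‖Complex.exp (-(Complex.exp (↑(α*ψ) * Complex.I) * ↑(s^α))) - 1‖
          ≤ ‖Complex.exp (↑(α*ψ) * Complex.I) * ↑(s^α)‖ := this
        _ = s ^ α := by
          rw [norm_mul,
            Complex.norm_exp_ofReal_mul_I, Complex.norm_real, Real.norm_eq_abs, one_mul,
            abs_of_nonneg (Real.rpow_nonneg hs0.le α)]
    calc ‖(s:ℂ)^β‖ * ‖Complex.exp ((β+1)*(↑ψ*Complex.I) - bψ * ↑s)‖ *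
          ‖Complex.exp (-(Complex.exp (↑(α*ψ) * Complex.I) * ↑(s^α))) - 1‖
        ≤ s ^ β.re * (Real.exp (‖β+1‖ * Real.pi) * Real.exp (-(R * m0 * s))) * s ^ α := by
          rw [h1]
          refine mul_le_mul (mul_le_mul_of_nonneg_left h2 (Real.rpow_nonneg hs0.le _)) h3
            (norm_nonneg _) (by positivity)
      _ = Real.exp (‖β+1‖ * Real.pi) * (s ^ (β.re + α) * Real.exp (-(R * m0 * s))) := by
          rw [Real.rpow_add hs0]; ring
  -- integral bound
  have hRm0 : 0 < R * m0 := mul_pos hR0 hm0pos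
  have hbint : IntegrableOn
      (fun s : ℝ => Real.exp (‖β+1‖ * Real.pi) * (s ^ (β.re + α) * Real.exp (-(R * m0 * s))))
      (Ioi (0:ℝ)) := by
    have h0 := int_main (α := α) (p := β.re + α) (a := 0) (c := R * m0)
      hα (by linarith) le_rfl (Or.inr hRm0)
    refine (h0.congr_fun (fun s _ => ?_) measurableSet_Ioi).const_mul _
    rw [zero_mul, zero_add]
  have hIbd : ‖∫ s in Ioi (0:ℝ), (fI α β 1 b₀ ψ s - g s)‖
      ≤ Real.exp (‖β+1‖ * Real.pi) * ((1/(R*m0)) ^ p * Real.Gamma p) := by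
    have h1 : ‖∫ s in Ioi (0:ℝ), (fI α β 1 b₀ ψ s - g s)‖
        ≤ ∫ s in Ioi (0:ℝ), Real.exp (‖β+1‖ * Real.pi) *
            (s ^ (β.re + α) * Real.exp (-(R * m0 * s))) := by
      apply MeasureTheory.norm_integral_le_of_norm_le hbint
      filter_upwards [ae_restrict_mem measurableSet_Ioi] with s hs
      exact hdiffbd s hs
    have h2 : (∫ s in Ioi (0:ℝ), Real.exp (‖β+1‖ * Real.pi) *
          (s ^ (β.re + α) * Real.exp (-(R * m0 * s))))
        = Real.exp (‖β+1‖ * Real.pi) * ((1/(R*m0)) ^ p * Real.Gamma p) := by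
      rw [MeasureTheory.integral_const_mul]
      congr 1
      have := Real.integral_rpow_mul_exp_neg_mul_Ioi (a := p) hp0 hRm0
      rw [← this]
      refine setIntegral_congr_fun measurableSet_Ioi fun s _ => ?_
      rw [hpdef]
      norm_num
    rw [h2] at h1
    exact h1
  -- conclusion
  rw [key, norm_mul]
  have hfin : ‖Complex.exp (Complex.I * ↑Real.pi * (β+1)/(2*↑α))‖ *
        (Real.exp (‖β+1‖ * Real.pi) * ((1/(R*m0)) ^ p * Real.Gamma p))
      = K * R ^ (-β.re - α - 1) := by
    rw [hKdef]
    have hsplit : (1/(R*m0)) ^ p = R ^ (-β.re - α - 1) * m0 ^ (-p) := by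
      rw [one_div, Real.inv_rpow (mul_nonneg hR0.le hm0pos.le),
        ← Real.rpow_neg (mul_nonneg hR0.le hm0pos.le),
        Real.mul_rpow hR0.le hm0pos.le,
        show -p = -β.re - α - 1 by rw [hpdef]; ring]
    rw [hsplit]
    ring
  calc ‖Complex.exp (Complex.I * ↑Real.pi * (β+1)/(2*↑α))‖ *
        ‖∫ s in Ioi (0:ℝ), (fI α β 1 b₀ ψ s - g s)‖
      ≤ ‖Complex.exp (Complex.I * ↑Real.pi * (β+1)/(2*↑α))‖ *
        (Real.exp (‖β+1‖ * Real.pi) * ((1/(R*m0)) ^ p * Real.Gamma p)) :=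
        mul_le_mul_of_nonneg_left hIbd (norm_nonneg _)
    _ = K * R ^ (-β.re - α - 1) := hfin
end

section
/- Let α > 1 be real, β ∈ ℂ with Re β > −1, C > 0, and set κ = 1/(α−1). There exist constants K > 0 and x₀ > 0 such that for all z = x + iy with x ≤ −x₀ and |y| ≤ C log(2 + |x|)/(1 + |x|)^κ, one has |G_{α,β}(z)| ≤ K |x|^{−1 − Re β}. -/
set_option maxHeartbeats 1000000


open MeasureTheory Set

lemma re_aux (α : ℝ) (z : ℂ) (t : ℝ) :
    (-(↑(t ^ α) : ℂ) - Complex.I * Complex.exp (Complex.I * Real.pi / (2 * α)) * z * t).re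
      = -(t ^ α) + (z.re * Real.sin (Real.pi / (2*α)) + z.im * Real.cos (Real.pi / (2*α))) * t := by
  have hexp : Complex.exp (Complex.I * Real.pi / (2 * α))
      = Complex.ofReal (Real.cos (Real.pi / (2*α))) + Complex.ofReal (Real.sin (Real.pi / (2*α))) * Complex.I := by
    rw [show Complex.I * Real.pi / (2 * α) = ((Real.pi / (2*α) : ℝ) : ℂ) * Complex.I by
      push_cast; ring]
    rw [Complex.exp_mul_I, ← Complex.ofReal_cos, ← Complex.ofReal_sin]
  rw [hexp]
  simp only [Complex.sub_re, Complex.neg_re, Complex.mul_re, Complex.mul_im, Complex.add_re,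
    Complex.add_im, Complex.I_re, Complex.I_im, Complex.ofReal_re, Complex.ofReal_im]
  ring

/-- Bound for `G_{α,β}` on the negative-real part of the hourglass-shaped
region `|y| ≤ C log(2+|x|)/(1+|x|)^κ`, `κ = 1/(α−1)`. -/
theorem stmt_8 (α : ℝ) (hα : 1 < α) (β : ℂ) (hβ : -1 < β.re) (C : ℝ) (hC : 0 < C) :
    ∃ K x₀ : ℝ, 0 < K ∧ 0 < x₀ ∧
      ∀ z : ℂ, z.re ≤ -x₀ →
        |z.im| ≤ C * Real.log (2 + |z.re|) / (1 + |z.re|) ^ (1 / (α - 1)) →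
        ‖Gab α β z‖ ≤ K * |z.re| ^ (-1 - β.re) := by
  have hα0 : (0:ℝ) < α := by linarith
  set θ : ℝ := Real.pi / (2 * α) with hθdef
  have hθpos : 0 < θ := by positivity
  have hθltpi : θ < Real.pi := by
    rw [hθdef, div_lt_iff₀ (by positivity)]
    nlinarith [Real.pi_pos]
  have hσ : 0 < Real.sin θ := Real.sin_pos_of_pos_of_lt_pi hθpos hθltpi
  set σ := Real.sin θ with hσdef
  set b := β.re with hbdef
  have hb1 : 0 < b + 1 := by linarith
  have hΓ : 0 < Real.Gamma (b+1) := Real.Gamma_pos_of_pos hb1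
  set A := ‖Complex.exp (Complex.I * Real.pi * (β + 1) / (2 * α))‖ with hAdef
  have hA : 0 < A := norm_pos_iff.mpr (Complex.exp_ne_zero _)
  refine ⟨A * ((1 / (σ/2)) ^ (b+1) * Real.Gamma (b+1)), max 2 ((6*C/σ)^2), by positivity,
    lt_of_lt_of_le two_pos (le_max_left _ _), ?_⟩
  intro z hx hy
  set x := z.re with hxdef
  set y := z.im with hydef
  set u := |x| with hudef
  have hx0 : x < 0 := lt_of_le_of_lt hx (by
    have : (2:ℝ) ≤ max 2 ((6*C/σ)^2) := le_max_left _ _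
    linarith)
  have hux : u = -x := abs_of_neg hx0
  have hu2 : 2 ≤ u := by
    have : (2:ℝ) ≤ max 2 ((6*C/σ)^2) := le_max_left _ _
    linarith [hux ▸ (neg_le_neg hx)]
  have hupos : (0:ℝ) < u := by linarith
  have huC : (6*C/σ)^2 ≤ u := by
    have h1 : (6*C/σ)^2 ≤ max 2 ((6*C/σ)^2) := le_max_right _ _
    have h2 : max 2 ((6*C/σ)^2) ≤ -x := by linarith
    rw [hux]; linarith
  -- C log(2+u) ≤ (σ/2) u
  have hsq : Real.sqrt u * Real.sqrt u = u := Real.mul_self_sqrt hupos.le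
  have hsqC : 6*C/σ ≤ Real.sqrt u := by
    have := Real.sqrt_le_sqrt huC
    rwa [Real.sqrt_sq (by positivity)] at this
  have hlog : Real.log (2 + u) ≤ 3 * Real.sqrt u := by
    have h1 : Real.log (2+u) = 2 * Real.log (Real.sqrt (2+u)) := by
      rw [Real.log_sqrt (by linarith)]; ring
    have h2 : Real.log (Real.sqrt (2+u)) ≤ Real.sqrt (2+u) - 1 :=
      Real.log_le_sub_one_of_pos (Real.sqrt_pos.mpr (by linarith))
    have h3 : Real.sqrt (2+u) ≤ Real.sqrt (2*u) := Real.sqrt_le_sqrt (by linarith)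
    have h4 : Real.sqrt (2*u) ≤ 1.5 * Real.sqrt u := by
      have h5 : Real.sqrt (2*u) ≤ Real.sqrt ((1.5 * Real.sqrt u)^2) :=
        Real.sqrt_le_sqrt (by nlinarith [Real.sqrt_nonneg u])
      rwa [Real.sqrt_sq (by positivity)] at h5
    linarith
  have hkey : C * Real.log (2 + u) ≤ σ/2 * u := by
    have h5 : C * Real.log (2+u) ≤ 3 * C * Real.sqrt u := by nlinarith
    have h6 : 3 * C * Real.sqrt u ≤ σ/2 * u := by
      have hσs : 6 * C ≤ σ * Real.sqrt u := by
        rw [← div_le_iff₀' hσ]; exact hsqC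
      nlinarith [Real.sqrt_nonneg u]
    linarith
  -- |y| ≤ (σ/2) u
  have hy' : |y| ≤ σ/2 * u := by
    have hden : (1:ℝ) ≤ (1 + u) ^ (1 / (α - 1)) :=
      Real.one_le_rpow (by linarith) (by
        have h7 : (0:ℝ) < α - 1 := by linarith
        positivity)
    have hnum : 0 ≤ C * Real.log (2 + u) := by
      have : (0:ℝ) ≤ Real.log (2+u) := Real.log_nonneg (by linarith)
      positivity
    have := hy.trans (div_le_self hnum hden)
    linarith
  -- pointwise bound on the integrand
  set r := σ/2 * u with hrdef
  have hr : 0 < r := by rw [hrdef]; exact mul_pos (by linarith) hupos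
  have hbound : ∀ t ∈ Ioi (0:ℝ),
      ‖(t : ℂ) ^ β * Complex.exp (-(↑(t ^ α) : ℂ) -
        Complex.I * Complex.exp (Complex.I * Real.pi / (2 * α)) * z * t)‖
        ≤ t ^ b * Real.exp (-(r * t)) := by
    intro t ht
    rw [mem_Ioi] at ht
    rw [norm_mul,
      Complex.norm_cpow_eq_rpow_re_of_pos ht, Complex.norm_exp, re_aux, ← hbdef, ← hθdef,
      ← hxdef, ← hydef]
    have hre : -(t ^ α) + (x * Real.sin θ + y * Real.cos θ) * t ≤ -(r * t) := by
      have htα : 0 ≤ t ^ α := Real.rpow_nonneg ht.le α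
      have hcoef : x * Real.sin θ + y * Real.cos θ ≤ -(σ/2 * u) := by
        have h1 : y * Real.cos θ ≤ |y| := by
          calc y * Real.cos θ ≤ |y * Real.cos θ| := le_abs_self _
            _ = |y| * |Real.cos θ| := abs_mul _ _
            _ ≤ |y| * 1 := by
                exact mul_le_mul_of_nonneg_left (Real.abs_cos_le_one θ) (abs_nonneg _)
            _ = |y| := mul_one _
        have h2 : x * Real.sin θ = -(σ * u) := by rw [hux]; ring
        linarith
      have h8 := mul_le_mul_of_nonneg_right hcoef ht.le
      rw [hrdef]
      linarith
    exact mul_le_mul_of_nonneg_left (Real.exp_le_exp.mpr hre) (Real.rpow_nonneg ht.le b)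
  -- integrability of the dominating function
  have hgi : IntegrableOn (fun t : ℝ => t ^ b * Real.exp (-(r * t))) (Ioi 0) := by
    have := integrableOn_rpow_mul_exp_neg_mul_rpow (p := 1) (s := b) (b := r) hβ one_pos hr
    simpa only [Real.rpow_one, neg_mul] using this
  -- value of the dominating integral
  have hval : ∫ t in Ioi (0:ℝ), t ^ b * Real.exp (-(r * t))
      = (1 / r) ^ (b+1) * Real.Gamma (b+1) := by
    have := Real.integral_rpow_mul_exp_neg_mul_Ioi hb1 hr
    simpa only [add_sub_cancel_right] using this
  have hrsplit : ((1:ℝ) / r) ^ (b+1) = (1 / (σ/2)) ^ (b+1) * u ^ (-1-b) := by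
    rw [show (1:ℝ)/r = (1/(σ/2)) * (1/u) by rw [hrdef]; field_simp,
      Real.mul_rpow (by positivity) (by positivity), one_div u,
      Real.inv_rpow hupos.le, ← Real.rpow_neg hupos.le,
      show -(b+1) = -1-b by ring]
  calc ‖Gab α β z‖
      = A * ‖∫ t in Ioi (0:ℝ), (t : ℂ) ^ β * Complex.exp (-(↑(t ^ α) : ℂ) -
          Complex.I * Complex.exp (Complex.I * Real.pi / (2 * α)) * z * t)‖ := by
        rw [Gab, norm_mul]
    _ ≤ A * ∫ t in Ioi (0:ℝ), t ^ b * Real.exp (-(r * t)) := by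
        refine mul_le_mul_of_nonneg_left ?_ hA.le
        refine (norm_integral_le_integral_norm _).trans ?_
        refine integral_mono_of_nonneg (ae_of_all _ fun t => norm_nonneg _) hgi ?_
        exact (ae_restrict_iff' measurableSet_Ioi).mpr (ae_of_all _ hbound)
    _ = A * ((1 / (σ/2)) ^ (b+1) * Real.Gamma (b+1)) * u ^ (-1-b) := by
        rw [hval, hrsplit]; ring
end

section
/- Let κ > 0. There exists a constant c ∈ ℂ such that, as x → ∞, ∫₀^x exp(i t^{1+1/κ}) dt = c + exp(i x^{1+1/κ}) / ( i (1 + 1/κ) x^{1/κ} ) + O( x^{−1 − 2/κ} ). -/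
open MeasureTheory Set

noncomputable def phiA (α : ℝ) (t : ℝ) : ℂ := Complex.exp (Complex.I * ((t ^ α : ℝ) : ℂ))

lemma norm_phiA (α t : ℝ) : ‖phiA α t‖ = 1 := by
  simp [phiA, Complex.norm_exp]

lemma continuous_phiA {α : ℝ} (hα : 0 < α) : Continuous (phiA α) := by
  apply Complex.continuous_exp.comp
  apply continuous_const.mul
  apply Complex.continuous_ofReal.comp
  rw [continuous_iff_continuousAt]
  exact fun t => Real.continuousAt_rpow_const t α (Or.inr hα.le)

lemma hasDerivAt_phiA_mul (α β : ℝ) {t : ℝ} (ht : 0 < t) :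
    HasDerivAt (fun t : ℝ => phiA α t * ((t ^ β : ℝ) : ℂ))
      (Complex.I * α * ((t ^ (α - 1) : ℝ) : ℂ) * phiA α t * ((t ^ β : ℝ) : ℂ)
        + phiA α t * ((β * t ^ (β - 1) : ℝ) : ℂ)) t := by
  have h1 : HasDerivAt (fun t : ℝ => ((t ^ α : ℝ) : ℂ)) (((α * t ^ (α - 1) : ℝ) : ℂ)) t :=
    (Real.hasDerivAt_rpow_const (p := α) (Or.inl ht.ne')).ofReal_comp
  have h3 : HasDerivAt (phiA α)
      (phiA α t * (Complex.I * ((α * t ^ (α - 1) : ℝ) : ℂ))) t := (h1.const_mul Complex.I).cexp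
  have h4 : HasDerivAt (fun t : ℝ => ((t ^ β : ℝ) : ℂ)) (((β * t ^ (β - 1) : ℝ) : ℂ)) t :=
    (Real.hasDerivAt_rpow_const (p := β) (Or.inl ht.ne')).ofReal_comp
  have := h3.mul h4
  convert this using 1
  rfl; rfl
  push_cast
  ring

lemma hasDerivAt_gA {α : ℝ} (hα : 0 < α) (β : ℝ) {t : ℝ} (ht : 0 < t) :
    HasDerivAt (fun t : ℝ => (Complex.I * α)⁻¹ * (phiA α t * ((t ^ β : ℝ) : ℂ)))
      (phiA α t * ((t ^ (β + α - 1) : ℝ) : ℂ)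
        + (Complex.I * α)⁻¹ * β * (phiA α t * ((t ^ (β - 1) : ℝ) : ℂ))) t := by
  have hIα : (Complex.I * (α : ℂ)) ≠ 0 :=
    mul_ne_zero Complex.I_ne_zero (by exact_mod_cast hα.ne')
  have h := (hasDerivAt_phiA_mul α β ht).const_mul ((Complex.I * α)⁻¹)
  convert h using 1
  rfl
  have h1 : t ^ (β + α - 1) = t ^ (α - 1) * t ^ β := by
    rw [← Real.rpow_add ht]; ring_nf
  rw [h1]
  push_cast
  have hα' : (α : ℂ) ≠ 0 := by exact_mod_cast hα.ne'
  field_simp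

lemma integrableOn_phiA_rpow {α : ℝ} (hα : 0 < α) {a : ℝ} (ha : a < -1) {c : ℝ} (hc : 0 < c) :
    IntegrableOn (fun t : ℝ => phiA α t * ((t ^ a : ℝ) : ℂ)) (Ioi c) := by
  have hint := integrableOn_Ioi_rpow_of_lt ha hc
  refine Integrable.mono' hint ?_ ?_
  · apply ContinuousOn.aestronglyMeasurable ?_ measurableSet_Ioi
    apply ContinuousOn.mul
    · exact (continuous_phiA hα).continuousOn
    · exact Complex.continuous_ofReal.comp_continuousOn
        (fun t htmem => (Real.continuousAt_rpow_const t a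
          (Or.inl (hc.trans htmem).ne')).continuousWithinAt)
  · filter_upwards [ae_restrict_mem measurableSet_Ioi] with t htmem
    rw [norm_mul, norm_phiA, one_mul, Complex.norm_real,
      Real.norm_eq_abs, abs_of_nonneg (Real.rpow_nonneg (hc.trans htmem).le a)]

lemma tail_bound {α : ℝ} (hα : 1 < α) {x : ℝ} (hx : 0 < x) :
    ‖∫ t in Ioi x, phiA α t * ((t ^ (-α) : ℝ) : ℂ)‖ ≤ 2 * x ^ (1 - 2*α) := by
  have hα0 : 0 < α := by linarith
  have hmα : (-α : ℝ) < -1 := by linarith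
  have h2α : (-(2*α) : ℝ) < -1 := by linarith
  set C : ℂ := (Complex.I * α)⁻¹ with hC
  have hderiv : ∀ t ∈ Ici x, HasDerivAt (fun t : ℝ => C * (phiA α t * ((t ^ (1-2*α) : ℝ) : ℂ)))
      (phiA α t * ((t ^ (-α) : ℝ) : ℂ)
        + C * ((1-2*α : ℝ) : ℂ) * (phiA α t * ((t ^ (-(2*α)) : ℝ) : ℂ))) t := by
    intro t htmem
    have ht : 0 < t := lt_of_lt_of_le hx htmem
    have h := hasDerivAt_gA hα0 (1-2*α) ht
    rw [show (1-2*α+α-1 : ℝ) = -α by ring, show (1-2*α-1 : ℝ) = -(2*α) by ring] at h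
    exact h
  have int1 : IntegrableOn (fun t : ℝ => phiA α t * ((t ^ (-α) : ℝ) : ℂ)) (Ioi x) :=
    integrableOn_phiA_rpow hα0 hmα hx
  have int2 : IntegrableOn (fun t : ℝ => phiA α t * ((t ^ (-(2*α)) : ℝ) : ℂ)) (Ioi x) :=
    integrableOn_phiA_rpow hα0 h2α hx
  have int2' : IntegrableOn
      (fun t : ℝ => C * ((1-2*α : ℝ) : ℂ) * (phiA α t * ((t ^ (-(2*α)) : ℝ) : ℂ))) (Ioi x) :=
    int2.const_mul _
  have htend : Filter.Tendsto (fun t : ℝ => C * (phiA α t * ((t ^ (1-2*α) : ℝ) : ℂ)))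
      Filter.atTop (nhds 0) := by
    have hg : Filter.Tendsto (fun t : ℝ => ‖C‖ * t ^ (-(2*α-1))) Filter.atTop (nhds 0) := by
      simpa using (tendsto_rpow_neg_atTop (show (0:ℝ) < 2*α-1 by linarith)).const_mul ‖C‖
    apply squeeze_zero_norm' _ hg
    filter_upwards [Filter.eventually_gt_atTop (0:ℝ)] with t ht
    rw [norm_mul, norm_mul, norm_phiA, one_mul, Complex.norm_real, Real.norm_eq_abs,
      abs_of_nonneg (Real.rpow_nonneg ht.le _), show (1-2*α : ℝ) = -(2*α-1) by ring]
  have hFTC := integral_Ioi_of_hasDerivAt_of_tendsto' hderiv (int1.add int2') htend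
  rw [integral_add int1 int2', MeasureTheory.integral_const_mul, zero_sub] at hFTC
  have hT : (∫ t in Ioi x, phiA α t * ((t ^ (-α) : ℝ) : ℂ))
      = -(C * (phiA α x * ((x ^ (1-2*α) : ℝ) : ℂ)))
        - C * ((1-2*α : ℝ) : ℂ) * ∫ t in Ioi x, phiA α t * ((t ^ (-(2*α)) : ℝ) : ℂ) := by
    linear_combination hFTC
  have hnormC : ‖C‖ = α⁻¹ := by
    simp [hC, map_mul, abs_of_pos hα0]
  have hP : (0:ℝ) < x ^ (1-2*α) := Real.rpow_pos_of_pos hx _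
  have hJ2 : ‖∫ t in Ioi x, phiA α t * ((t ^ (-(2*α)) : ℝ) : ℂ)‖ ≤ x ^ (1-2*α) / (2*α-1) := by
    refine le_trans (norm_integral_le_integral_norm _) ?_
    have heq : ∀ t ∈ Ioi x, ‖phiA α t * ((t ^ (-(2*α)) : ℝ) : ℂ)‖ = t ^ (-(2*α)) := by
      intro t htmem
      rw [norm_mul, norm_phiA, one_mul, Complex.norm_real, Real.norm_eq_abs,
        abs_of_nonneg (Real.rpow_nonneg (hx.trans htmem).le _)]
    rw [setIntegral_congr_fun measurableSet_Ioi heq, integral_Ioi_rpow_of_lt h2α hx,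
      show (-(2*α)+1 : ℝ) = 1-2*α by ring]
    apply le_of_eq
    rw [div_eq_div_iff (by linarith) (by linarith)]
    ring
  rw [hT]
  have h1 : ‖-(C * (phiA α x * ((x ^ (1-2*α) : ℝ) : ℂ)))‖ = α⁻¹ * x ^ (1-2*α) := by
    rw [norm_neg, norm_mul, norm_mul, norm_phiA, one_mul, hnormC, Complex.norm_real,
      Real.norm_eq_abs, abs_of_pos hP]
  have h2 : ‖C * ((1-2*α : ℝ) : ℂ)‖ = α⁻¹ * (2*α-1) := by
    rw [norm_mul, hnormC, Complex.norm_real, Real.norm_eq_abs,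
      abs_of_neg (show (1-2*α : ℝ) < 0 by linarith), neg_sub]
  calc ‖_ - _‖ ≤ ‖-(C * (phiA α x * ((x ^ (1-2*α) : ℝ) : ℂ)))‖
        + ‖C * ((1-2*α : ℝ) : ℂ) * ∫ t in Ioi x, phiA α t * ((t ^ (-(2*α)) : ℝ) : ℂ)‖ :=
      norm_sub_le _ _
    _ ≤ α⁻¹ * x ^ (1-2*α) + (α⁻¹ * (2*α-1)) * (x ^ (1-2*α) / (2*α-1)) := by
        rw [h1, norm_mul, h2]
        gcongr
        exact mul_nonneg (by positivity) (by linarith)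
    _ ≤ 2 * x ^ (1-2*α) := by
        have h3 : (α⁻¹ * (2*α-1)) * (x ^ (1-2*α) / (2*α-1)) = α⁻¹ * x ^ (1-2*α) := by
          rw [mul_assoc, mul_comm ((2*α-1):ℝ), div_mul_cancel₀ _ (show (2*α-1:ℝ) ≠ 0 by linarith)]
        rw [h3]
        have hinv : α⁻¹ ≤ 1 := by
          rw [inv_le_one_iff₀]; right; linarith
        nlinarith

lemma phiA_def (α t : ℝ) : Complex.exp (Complex.I * ((t ^ α : ℝ) : ℂ)) = phiA α t := rfl

/-- Asymptotics of `∫₀ˣ exp(i t^{1+1/κ}) dt` obtained by integration by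
parts. -/
theorem stmt_10 (κ : ℝ) (hκ : 0 < κ) :
    ∃ c : ℂ, ∃ K x₀ : ℝ, 0 < K ∧ 0 < x₀ ∧ ∀ x : ℝ, x₀ ≤ x →
      ‖(∫ t in (0:ℝ)..x, Complex.exp (Complex.I * (↑(t ^ (1 + 1/κ)) : ℂ))) - c -
          Complex.exp (Complex.I * (↑(x ^ (1 + 1/κ)) : ℂ)) /
            (Complex.I * (1 + 1/(κ:ℂ)) * (↑(x ^ (1/κ)) : ℂ))‖
        ≤ K * x ^ (-1 - 2/κ) := by
  have hκ' : 0 < 1/κ := by positivity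
  set α : ℝ := 1 + 1/κ with hαdef
  have hα : 1 < α := by rw [hαdef]; linarith
  have hα0 : 0 < α := by linarith
  have hIα : (Complex.I * (α : ℂ)) ≠ 0 :=
    mul_ne_zero Complex.I_ne_zero (by exact_mod_cast hα0.ne')
  have hcont : Continuous (phiA α) := continuous_phiA hα0
  have hphi_ii : ∀ a b : ℝ, IntervalIntegrable (phiA α) volume a b :=
    fun a b => hcont.intervalIntegrable a b
  set C : ℂ := (Complex.I * (α : ℂ))⁻¹ with hC
  have hmα : (-α : ℝ) < -1 := by linarith
  have hJint : IntegrableOn (fun t : ℝ => phiA α t * ((t ^ (-α) : ℝ) : ℂ)) (Ioi 1) :=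
    integrableOn_phiA_rpow hα0 hmα one_pos
  set J : ℂ := ∫ t in Ioi (1:ℝ), phiA α t * ((t ^ (-α) : ℝ) : ℂ) with hJ
  refine ⟨(∫ t in (0:ℝ)..1, phiA α t) - C * (phiA α 1 * (((1:ℝ) ^ (1-α) : ℝ) : ℂ))
      - C * ((1-α : ℝ) : ℂ) * J, 2, 1, two_pos, one_pos, fun x hx => ?_⟩
  have hx0 : (0:ℝ) < x := lt_of_lt_of_le one_pos hx
  simp only [phiA_def]
  have hderiv : ∀ t ∈ uIcc (1:ℝ) x,
      HasDerivAt (fun t : ℝ => C * (phiA α t * ((t ^ (1-α) : ℝ) : ℂ)))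
        (phiA α t + C * ((1-α : ℝ) : ℂ) * (phiA α t * ((t ^ (-α) : ℝ) : ℂ))) t := by
    intro t htmem
    rw [uIcc_of_le hx] at htmem
    have ht : 0 < t := lt_of_lt_of_le one_pos htmem.1
    have h := hasDerivAt_gA hα0 (1-α) ht
    rw [show (1-α+α-1:ℝ) = 0 by ring, show (1-α-1:ℝ) = -α by ring, Real.rpow_zero,
      Complex.ofReal_one, mul_one] at h
    exact h
  have hcont2 : ContinuousOn (fun t : ℝ => phiA α t * ((t ^ (-α) : ℝ) : ℂ)) (uIcc (1:ℝ) x) := by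
    apply hcont.continuousOn.mul
    apply Complex.continuous_ofReal.comp_continuousOn
    intro t htmem
    rw [uIcc_of_le hx] at htmem
    exact (Real.continuousAt_rpow_const t (-α)
      (Or.inl (lt_of_lt_of_le one_pos htmem.1).ne')).continuousWithinAt
  have hii2 : IntervalIntegrable (fun t : ℝ => phiA α t * ((t ^ (-α) : ℝ) : ℂ)) volume 1 x :=
    hcont2.intervalIntegrable
  have hii2' : IntervalIntegrable
      (fun t : ℝ => C * ((1-α : ℝ) : ℂ) * (phiA α t * ((t ^ (-α) : ℝ) : ℂ))) volume 1 x :=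
    hii2.const_mul _
  have hFTC := intervalIntegral.integral_eq_sub_of_hasDerivAt hderiv ((hphi_ii 1 x).add hii2')
  rw [intervalIntegral.integral_add (hphi_ii 1 x) hii2',
    intervalIntegral.integral_const_mul] at hFTC
  have hsplitJ : J = (∫ t in (1:ℝ)..x, phiA α t * ((t ^ (-α) : ℝ) : ℂ))
      + ∫ t in Ioi x, phiA α t * ((t ^ (-α) : ℝ) : ℂ) := by
    rw [intervalIntegral.integral_of_le hx, hJ, ← Ioc_union_Ioi_eq_Ioi hx,
      setIntegral_union (Ioc_disjoint_Ioi le_rfl) measurableSet_Ioi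
        (hJint.mono_set Ioc_subset_Ioi_self) (integrableOn_phiA_rpow hα0 hmα hx0)]
  have hsplit : (∫ t in (0:ℝ)..x, phiA α t)
      = (∫ t in (0:ℝ)..1, phiA α t) + ∫ t in (1:ℝ)..x, phiA α t :=
    (intervalIntegral.integral_add_adjacent_intervals (hphi_ii 0 1) (hphi_ii 1 x)).symm
  have hterm : C * (phiA α x * ((x ^ (1-α) : ℝ) : ℂ))
      = phiA α x / (Complex.I * (1 + 1/(κ:ℂ)) * ((x ^ (1/κ) : ℝ) : ℂ)) := by
    have hcast : ((α : ℝ) : ℂ) = 1 + 1/(κ:ℂ) := by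
      rw [hαdef]; push_cast; ring
    have hr : ((x ^ (1/κ) : ℝ) : ℂ) ≠ 0 := by
      exact_mod_cast (Real.rpow_pos_of_pos hx0 _).ne'
    rw [show (1-α:ℝ) = -(1/κ) by rw [hαdef]; ring, Real.rpow_neg hx0.le, hC, ← hcast,
      Complex.ofReal_inv]
    field_simp
  have hEq : (∫ t in (0:ℝ)..x, phiA α t)
      - ((∫ t in (0:ℝ)..1, phiA α t) - C * (phiA α 1 * (((1:ℝ) ^ (1-α) : ℝ) : ℂ))
          - C * ((1-α : ℝ) : ℂ) * J)
      - phiA α x / (Complex.I * (1 + 1/(κ:ℂ)) * ((x ^ (1/κ) : ℝ) : ℂ))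
      = C * ((1-α : ℝ) : ℂ) * ∫ t in Ioi x, phiA α t * ((t ^ (-α) : ℝ) : ℂ) := by
    linear_combination hsplit + hFTC + (C * ((1-α : ℝ) : ℂ)) * hsplitJ + hterm
  rw [hEq, norm_mul]
  have hcoef : ‖C * ((1-α : ℝ) : ℂ)‖ ≤ 1 := by
    rw [norm_mul, hC]
    have h1 : ‖(Complex.I * (α : ℂ))⁻¹‖ = α⁻¹ := by
      simp [map_mul, abs_of_pos hα0]
    rw [h1, Complex.norm_real, Real.norm_eq_abs, abs_of_neg (show (1-α:ℝ) < 0 by linarith),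
      neg_sub]
    calc α⁻¹ * (α - 1) ≤ α⁻¹ * α := by gcongr; linarith
      _ = 1 := inv_mul_cancel₀ hα0.ne'
  have hbT := tail_bound hα hx0
  calc ‖C * ((1-α : ℝ) : ℂ)‖ * ‖∫ t in Ioi x, phiA α t * ((t ^ (-α) : ℝ) : ℂ)‖
      ≤ 1 * (2 * x ^ (1-2*α)) :=
        mul_le_mul hcoef hbT (norm_nonneg _) one_pos.le
    _ = 2 * x ^ (-1-2/κ) := by rw [one_mul, show (1-2*α : ℝ) = -1-2/κ by rw [hαdef]; ring]
end

section
/- Let κ > 0 and let c ∈ ℂ be the constant for which ∫₀^x exp(i t^{1+1/κ}) dt − exp(i x^{1+1/κ})/( i (1+1/κ) x^{1/κ} ) → c as x → ∞. Then lim_{x→∞} x^{1/κ} · | ∫₀^x exp(i t^{1+1/κ}) dt − c | = κ/(κ+1). In particular, ∫₀^x exp(i t^{1+1/κ}) dt − c is not o(x^{−1/κ}). -/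
open MeasureTheory Set Filter

lemma aux_deriv (r s : ℝ) (w : ℂ) (x : ℝ) (hx : 0 < x) :
    HasDerivAt (fun t : ℝ => w * ((t ^ s : ℝ) : ℂ) * Complex.exp (Complex.I * ((t ^ (1+r) : ℝ) : ℂ)))
      ((w * s * ((x ^ (s-1) : ℝ) : ℂ) + w * Complex.I * ((1+r : ℝ) : ℂ) * ((x ^ (s + r) : ℝ) : ℂ)) *
        Complex.exp (Complex.I * ((x ^ (1+r) : ℝ) : ℂ))) x := by
  have h1 : HasDerivAt (fun t : ℝ => t ^ s) (s * x ^ (s-1)) x :=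
    Real.hasDerivAt_rpow_const (Or.inl hx.ne')
  have h2 : HasDerivAt (fun t : ℝ => t ^ (1+r)) ((1+r) * x ^ r) x := by
    have := Real.hasDerivAt_rpow_const (x := x) (p := 1+r) (Or.inl hx.ne')
    simpa [add_sub_cancel_left] using this
  have h1' : HasDerivAt (fun t : ℝ => ((t ^ s : ℝ) : ℂ)) (((s * x ^ (s-1) : ℝ)) : ℂ) x :=
    h1.ofReal_comp
  have h2' : HasDerivAt (fun t : ℝ => Complex.I * ((t ^ (1+r) : ℝ) : ℂ))
      (Complex.I * (((1+r) * x ^ r : ℝ) : ℂ)) x := (h2.ofReal_comp).const_mul Complex.I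
  have h3 := h2'.cexp
  have h4 := (h1'.const_mul w).mul h3
  convert h4 using 1
  case e'_4 => rfl
  case e'_8 => rfl
  have e3 : ((x ^ (s-1) : ℝ) : ℂ) * ((x ^ (1+r) : ℝ) : ℂ) = ((x ^ s : ℝ) : ℂ) * ((x ^ r : ℝ) : ℂ) := by
    norm_cast
    rw [← Real.rpow_add hx, ← Real.rpow_add hx]
    ring_nf
  rw [show s + r = (s - 1) + (1 + r) by ring, Real.rpow_add hx]
  push_cast
  linear_combination (w * Complex.I * (1 + (r:ℂ)) * Complex.exp (Complex.I * ((x ^ (1+r) : ℝ) : ℂ))) * e3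

noncomputable def phiF (r t : ℝ) : ℂ := Complex.exp (Complex.I * ((t ^ (1+r) : ℝ) : ℂ))
noncomputable def bC (r : ℝ) : ℂ := Complex.I * ((1+r : ℝ) : ℂ)
noncomputable def GF (r x : ℝ) : ℂ := ∫ t in (0:ℝ)..x, phiF r t
noncomputable def hF (r x : ℝ) : ℂ := GF r x - (bC r)⁻¹ * ((x ^ (-r) : ℝ) : ℂ) * phiF r x
noncomputable def w1 (r : ℝ) : ℂ := (r:ℂ) / (bC r)^2
noncomputable def mF (r x : ℝ) : ℂ := w1 r * ((x ^ (-(2*r+1)) : ℝ) : ℂ) * phiF r x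
noncomputable def kF (r x : ℝ) : ℂ := hF r x - mF r x
noncomputable def KF (r t : ℝ) : ℂ := ((2*r+1 : ℝ) : ℂ) * w1 r * ((t ^ (-(2*r+2)) : ℝ) : ℂ) * phiF r t

lemma phi_cont (r : ℝ) (hr : 0 < r) : Continuous (phiF r) := by
  apply Complex.continuous_exp.comp
  apply continuous_const.mul
  apply Complex.continuous_ofReal.comp
  rw [continuous_iff_continuousAt]
  exact fun t => Real.continuousAt_rpow_const t (1+r) (Or.inr (by positivity))

lemma norm_phi (r t : ℝ) : ‖phiF r t‖ = 1 := by
  simp [phiF, Complex.norm_exp, Complex.mul_re]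

lemma b_ne (r : ℝ) (hr : 0 < r) : bC r ≠ 0 := by
  apply mul_ne_zero Complex.I_ne_zero
  exact Complex.ofReal_ne_zero.mpr (by positivity)

lemma norm_b (r : ℝ) (hr : 0 < r) : ‖bC r‖ = 1 + r := by
  rw [bC, norm_mul, Complex.norm_I, one_mul, Complex.norm_real, Real.norm_eq_abs,
    abs_of_pos (by linarith)]

lemma hasDerivAt_GF (r : ℝ) (hr : 0 < r) (x : ℝ) : HasDerivAt (GF r) (phiF r x) x := by
  exact intervalIntegral.integral_hasDerivAt_right
    ((phi_cont r hr).intervalIntegrable _ _)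
    ((phi_cont r hr).stronglyMeasurable.stronglyMeasurableAtFilter)
    (phi_cont r hr).continuousAt

lemma hasDerivAt_hF (r : ℝ) (hr : 0 < r) (x : ℝ) (hx : 0 < x) :
    HasDerivAt (hF r) ((r:ℂ)/(bC r) * ((x ^ (-r-1) : ℝ) : ℂ) * phiF r x) x := by
  have hb := b_ne r hr
  have hE := aux_deriv r (-r) (bC r)⁻¹ x hx
  have := (hasDerivAt_GF r hr x).sub hE
  convert this using 1
  case e'_4 => rfl
  case e'_8 => rfl
  rw [show (-r + r : ℝ) = 0 by ring, Real.rpow_zero]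
  have hbb : (bC r)⁻¹ * Complex.I * ((1+r:ℝ):ℂ) = 1 := by
    rw [mul_assoc]; exact inv_mul_cancel₀ hb
  rw [hbb]
  push_cast [div_eq_mul_inv]
  simp only [phiF]
  ring

lemma hasDerivAt_mF (r : ℝ) (hr : 0 < r) (x : ℝ) (hx : 0 < x) :
    HasDerivAt (mF r) ((r:ℂ)/(bC r) * ((x ^ (-r-1) : ℝ) : ℂ) * phiF r x - KF r x) x := by
  have hb := b_ne r hr
  have hm := aux_deriv r (-(2*r+1)) (w1 r) x hx
  convert hm using 1
  case e'_8 => rfl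
  rw [show (-(2*r+1) - 1 : ℝ) = -(2*r+2) by ring, show (-(2*r+1) + r : ℝ) = -r-1 by ring]
  have hww : w1 r * Complex.I * ((1+r:ℝ):ℂ) = (r:ℂ)/(bC r) := by
    rw [mul_assoc]
    show w1 r * bC r = _
    rw [w1]
    field_simp
  rw [hww, KF]
  push_cast
  simp only [phiF]
  ring

lemma hasDerivAt_kF (r : ℝ) (hr : 0 < r) (x : ℝ) (hx : 0 < x) :
    HasDerivAt (kF r) (KF r x) x := by
  have := (hasDerivAt_hF r hr x hx).sub (hasDerivAt_mF r hr x hx)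
  simp only [sub_sub_cancel] at this
  exact this

lemma norm_w1 (r : ℝ) (hr : 0 < r) : ‖w1 r‖ = r / (1+r)^2 := by
  rw [w1, norm_div, norm_pow, norm_b r hr, Complex.norm_real, Real.norm_eq_abs,
    abs_of_pos hr]

lemma norm_KF (r : ℝ) (hr : 0 < r) (t : ℝ) (ht : 0 < t) :
    ‖KF r t‖ = ((2*r+1) * (r/(1+r)^2)) * t ^ (-(2*r+2)) := by
  rw [KF, norm_mul, norm_mul, norm_mul, norm_phi, mul_one, norm_w1 r hr, Complex.norm_real,
    Complex.norm_real, Real.norm_eq_abs, Real.norm_eq_abs, abs_of_pos (by linarith),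
    abs_of_pos (Real.rpow_pos_of_pos ht _)]

lemma KF_contOn (r : ℝ) (hr : 0 < r) : ContinuousOn (KF r) {t : ℝ | 0 < t} := by
  apply ContinuousOn.mul _ (phi_cont r hr).continuousOn
  apply ContinuousOn.mul continuousOn_const
  intro t ht
  exact ((Complex.continuous_ofReal.continuousAt).comp
    (Real.continuousAt_rpow_const t _ (Or.inl (ne_of_gt ht)))).continuousWithinAt

lemma tail_bound_s11 (r : ℝ) (hr : 0 < r) (x y : ℝ) (hx : 0 < x) (hxy : x ≤ y) :
    ‖kF r y - kF r x‖ ≤ (r/(1+r)^2) * x ^ (-(2*r+1)) := by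
  have hsub : uIcc x y ⊆ {t : ℝ | 0 < t} := by
    rw [uIcc_of_le hxy]
    intro t ht
    exact lt_of_lt_of_le hx ht.1
  have hI : IntervalIntegrable (KF r) volume x y :=
    ((KF_contOn r hr).mono hsub).intervalIntegrable
  have ftc : ∫ t in x..y, KF r t = kF r y - kF r x :=
    intervalIntegral.integral_eq_sub_of_hasDerivAt
      (fun t ht => hasDerivAt_kF r hr t (hsub ht)) hI
  rw [← ftc]
  set Cc : ℝ := (2*r+1) * (r/(1+r)^2) with hCc
  have hgI : IntervalIntegrable (fun t : ℝ => Cc * t ^ (-(2*r+2))) volume x y := by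
    apply ContinuousOn.intervalIntegrable
    apply ContinuousOn.mul continuousOn_const
    intro t ht
    exact (Real.continuousAt_rpow_const t _ (Or.inl (ne_of_gt (hsub ht)))).continuousWithinAt
  have hbnd : ‖∫ t in x..y, KF r t‖ ≤ |∫ t in x..y, Cc * t ^ (-(2*r+2))| := by
    apply intervalIntegral.norm_integral_le_abs_of_norm_le _ hgI
    filter_upwards [ae_restrict_mem measurableSet_uIoc] with t ht
    have ht' : 0 < t := hsub (uIoc_subset_uIcc ht)
    rw [norm_KF r hr t ht']
  refine hbnd.trans ?_
  rw [intervalIntegral.integral_const_mul, integral_rpow (Or.inr ⟨by intro h; nlinarith,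
    fun h => by simpa using hsub h⟩)]
  rw [show (-(2*r+2) + 1 : ℝ) = -(2*r+1) by ring]
  have hv0 : (0:ℝ) ≤ y ^ (-(2*r+1)) := Real.rpow_nonneg (by linarith) _
  have hvu : y ^ (-(2*r+1)) ≤ x ^ (-(2*r+1)) := by
    apply Real.rpow_le_rpow_of_nonpos hx hxy (by linarith)
  have hD : (0:ℝ) ≤ r/(1+r)^2 := by positivity
  have heq : Cc * ((y ^ (-(2*r+1)) - x ^ (-(2*r+1))) / (-(2*r+1)))
      = (r/(1+r)^2) * (x ^ (-(2*r+1)) - y ^ (-(2*r+1))) := by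
    rw [hCc, div_neg, ← neg_div, neg_sub]
    have h1 : ((1+r:ℝ))^2 ≠ 0 := by positivity
    have h2 : (2*r+1:ℝ) ≠ 0 := by positivity
    field_simp
  rw [heq, abs_of_nonneg (mul_nonneg hD (by linarith))]
  nlinarith

theorem main_aux (r : ℝ) (hr : 0 < r) (c : ℂ)
    (hc : Tendsto (hF r) atTop (nhds c)) :
    Tendsto (fun x : ℝ => x ^ r * ‖GF r x - c‖) atTop (nhds (1/(1+r))) := by
  have hb := b_ne r hr
  -- m tends to 0
  have hm0 : Tendsto (mF r) atTop (nhds 0) := by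
    rw [tendsto_zero_iff_norm_tendsto_zero]
    apply squeeze_zero' (Eventually.of_forall fun x => norm_nonneg _)
    · filter_upwards [eventually_ge_atTop (1:ℝ)] with x hx1
      have hx : (0:ℝ) < x := by linarith
      rw [mF, norm_mul, norm_mul, norm_phi, mul_one, Complex.norm_real, Real.norm_eq_abs,
        abs_of_pos (Real.rpow_pos_of_pos hx _)]
    · have := (tendsto_rpow_neg_atTop (y := 2*r+1) (by linarith)).const_mul ‖w1 r‖
      simpa using this
  have hk_lim : Tendsto (kF r) atTop (nhds c) := by
    have := hc.sub hm0
    rw [sub_zero] at this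
    exact this
  -- tail bound for k
  have hkc : ∀ x : ℝ, 0 < x → ‖kF r x - c‖ ≤ (r/(1+r)^2) * x ^ (-(2*r+1)) := by
    intro x hx
    rw [norm_sub_rev]
    have hlim : Tendsto (fun y => ‖kF r y - kF r x‖) atTop (nhds ‖c - kF r x‖) :=
      ((hk_lim.sub_const (kF r x)).norm)
    apply le_of_tendsto hlim
    filter_upwards [eventually_ge_atTop x] with y hy
    exact tail_bound_s11 r hr x y hx hy
  -- x^r * ‖h - c‖ → 0
  have Thc : Tendsto (fun x : ℝ => x ^ r * ‖hF r x - c‖) atTop (nhds 0) := by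
    apply squeeze_zero' (g := fun x : ℝ => (r/(1+r)^2 + ‖w1 r‖) * x ^ (-(r+1)))
      (by filter_upwards [eventually_ge_atTop (1:ℝ)] with x hx1
          have hx : (0:ℝ) ≤ x := by linarith
          exact mul_nonneg (Real.rpow_nonneg hx _) (norm_nonneg _))
    · filter_upwards [eventually_ge_atTop (1:ℝ)] with x hx1
      have hx : (0:ℝ) < x := by linarith
      have h1 : ‖hF r x - c‖ ≤ ‖kF r x - c‖ + ‖mF r x‖ := by
        have : hF r x - c = (kF r x - c) + mF r x := by rw [kF]; ring
        rw [this]; exact norm_add_le _ _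
      have h2 : ‖mF r x‖ = ‖w1 r‖ * x ^ (-(2*r+1)) := by
        rw [mF, norm_mul, norm_mul, norm_phi, mul_one, Complex.norm_real, Real.norm_eq_abs,
          abs_of_pos (Real.rpow_pos_of_pos hx _)]
      have h3 : x ^ r * x ^ (-(2*r+1)) = x ^ (-(r+1)) := by
        rw [← Real.rpow_add hx, show r + -(2*r+1) = -(r+1) by ring]
      have hxr : (0:ℝ) ≤ x ^ r := Real.rpow_nonneg hx.le _
      calc x ^ r * ‖hF r x - c‖ ≤ x ^ r * ((r/(1+r)^2) * x ^ (-(2*r+1)) + ‖w1 r‖ * x ^ (-(2*r+1))) := by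
            apply mul_le_mul_of_nonneg_left _ hxr
            rw [← h2]
            exact h1.trans (add_le_add_left (hkc x hx) _)
        _ = (r/(1+r)^2 + ‖w1 r‖) * x ^ (-(r+1)) := by rw [← h3]; ring
    · have := (tendsto_rpow_neg_atTop (y := r+1) (by linarith)).const_mul (r/(1+r)^2 + ‖w1 r‖)
      simpa using this
  -- combine
  rw [tendsto_iff_norm_sub_tendsto_zero]
  apply squeeze_zero' (Eventually.of_forall fun x => norm_nonneg _)
    (g := fun x : ℝ => x ^ r * ‖hF r x - c‖) _ Thc
  filter_upwards [eventually_ge_atTop (1:ℝ)] with x hx1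
  have hx : (0:ℝ) < x := by linarith
  have hxx : ((x ^ r : ℝ) : ℂ) * ((x ^ (-r) : ℝ) : ℂ) = 1 := by
    norm_cast
    rw [← Real.rpow_add hx]
    simp
  have hid : ((x ^ r : ℝ) : ℂ) * (GF r x - c)
      = (bC r)⁻¹ * phiF r x + ((x ^ r : ℝ) : ℂ) * (hF r x - c) := by
    rw [hF]
    linear_combination ((bC r)⁻¹ * phiF r x) * hxx
  have hnx : ‖((x ^ r : ℝ) : ℂ)‖ = x ^ r := by
    rw [Complex.norm_real, Real.norm_eq_abs, abs_of_pos (Real.rpow_pos_of_pos hx _)]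
  have hfx : x ^ r * ‖GF r x - c‖ = ‖(bC r)⁻¹ * phiF r x + ((x ^ r : ℝ) : ℂ) * (hF r x - c)‖ := by
    rw [← hid, norm_mul, hnx]
  have hnA : ‖(bC r)⁻¹ * phiF r x‖ = 1/(1+r) := by
    rw [norm_mul, norm_inv, norm_b r hr, norm_phi, mul_one, one_div]
  rw [hfx]
  calc ‖‖(bC r)⁻¹ * phiF r x + ((x ^ r : ℝ) : ℂ) * (hF r x - c)‖ - 1/(1+r)‖
      = |‖(bC r)⁻¹ * phiF r x + ((x ^ r : ℝ) : ℂ) * (hF r x - c)‖ - ‖(bC r)⁻¹ * phiF r x‖| := by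
        rw [hnA]; rfl
    _ ≤ ‖((bC r)⁻¹ * phiF r x + ((x ^ r : ℝ) : ℂ) * (hF r x - c)) - (bC r)⁻¹ * phiF r x‖ := by
        exact abs_norm_sub_norm_le _ _
    _ = ‖((x ^ r : ℝ) : ℂ) * (hF r x - c)‖ := by ring_nf
    _ = x ^ r * ‖hF r x - c‖ := by rw [norm_mul, hnx]

/-- Optimality: `x^{1/κ} |∫₀ˣ exp(i t^{1+1/κ}) dt − c| → κ/(κ+1)`; in
particular `∫₀ˣ exp(i t^{1+1/κ}) dt − c` is not `o(x^{−1/κ})`. -/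
theorem stmt_11 (κ : ℝ) (hκ : 0 < κ) (c : ℂ)
    (hc : Tendsto (fun x : ℝ =>
        (∫ t in (0:ℝ)..x, Complex.exp (Complex.I * (↑(t ^ (1 + 1/κ)) : ℂ))) -
          Complex.exp (Complex.I * (↑(x ^ (1 + 1/κ)) : ℂ)) /
            (Complex.I * (1 + 1/(κ:ℂ)) * (↑(x ^ (1/κ)) : ℂ)))
      atTop (nhds c)) :
    Tendsto (fun x : ℝ => x ^ (1/κ) *
        ‖(∫ t in (0:ℝ)..x, Complex.exp (Complex.I * (↑(t ^ (1 + 1/κ)) : ℂ))) - c‖)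
      atTop (nhds (κ / (κ + 1))) ∧
    ¬ Asymptotics.IsLittleO atTop
        (fun x : ℝ =>
          (∫ t in (0:ℝ)..x, Complex.exp (Complex.I * (↑(t ^ (1 + 1/κ)) : ℂ))) - c)
        (fun x : ℝ => x ^ (-(1/κ))) := by
  have hr : (0:ℝ) < 1/κ := by positivity
  have hκ' : (κ:ℂ) ≠ 0 := by exact_mod_cast hκ.ne'
  have hbeq : Complex.I * (1 + 1/(κ:ℂ)) = bC (1/κ) := by
    rw [bC]
    push_cast
    ring
  have hc' : Tendsto (hF (1/κ)) atTop (nhds c) := by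
    apply hc.congr'
    filter_upwards [eventually_ge_atTop (1:ℝ)] with x hx1
    have hx : (0:ℝ) < x := by linarith
    rw [hF, GF]
    congr 1
    rw [hbeq, Real.rpow_neg hx.le, div_eq_mul_inv, mul_inv]
    push_cast
    rw [phiF]
    ring
  have key := main_aux (1/κ) hr c hc'
  have hLeq : 1/(1 + 1/κ) = κ/(κ+1) := by
    field_simp
  have T1 : Tendsto (fun x : ℝ => x ^ (1/κ) *
      ‖(∫ t in (0:ℝ)..x, Complex.exp (Complex.I * (↑(t ^ (1 + 1/κ)) : ℂ))) - c‖)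
      atTop (nhds (κ / (κ + 1))) := by
    rw [← hLeq]
    exact key
  refine ⟨T1, ?_⟩
  intro hO
  have hε : (0:ℝ) < κ/(κ+1)/2 := by positivity
  have hev := hO.def hε
  have hle : κ/(κ+1) ≤ κ/(κ+1)/2 := by
    apply le_of_tendsto T1
    filter_upwards [eventually_ge_atTop (1:ℝ), hev] with x hx1 hx2
    have hx : (0:ℝ) < x := by linarith
    have hxn : ‖x ^ (-(1/κ))‖ = x ^ (-(1/κ)) := by
      rw [Real.norm_eq_abs, abs_of_pos (Real.rpow_pos_of_pos hx _)]
    rw [hxn] at hx2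
    have h3 : x ^ (1/κ) * x ^ (-(1/κ)) = 1 := by
      rw [← Real.rpow_add hx]; simp
    calc x ^ (1/κ) * ‖(∫ t in (0:ℝ)..x, Complex.exp (Complex.I * (↑(t ^ (1 + 1/κ)) : ℂ))) - c‖
        ≤ x ^ (1/κ) * (κ/(κ+1)/2 * x ^ (-(1/κ))) := by
          apply mul_le_mul_of_nonneg_left hx2 (Real.rpow_nonneg hx.le _)
      _ = κ/(κ+1)/2 := by rw [show x ^ (1/κ) * (κ/(κ+1)/2 * x ^ (-(1/κ))) = κ/(κ+1)/2 * (x ^ (1/κ) * x ^ (-(1/κ))) by ring, h3, mul_one]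
  have : (0:ℝ) < κ/(κ+1) := by positivity
  linarith
end
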